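/- arXiv:1212.6765 — 6 statements merged into one kernel-verified Lean document; each statement's English description precedes it below -/
import Mathlib

section
/- Let Γ be a group acting by homeomorphisms on a nonempty compact metrizable topological space X. If there exists a Γ-invariant mean on the Borel subsets of X (i.e. m(γ·B) = m(B) for every γ ∈ Γ and Borel B ⊆ X), then there exists a Γ-invariant Borel probability measure on X. -/
/-!
Statement 4: if a group `Γ` acts by homeomorphisms on a nonempty compact metrizable
space `X` and there is a `Γ`-invariant mean on the Borel subsets of `X`, then there is a
`Γ`-invariant Borel probability measure on `X`.
-/

open MeasureTheory Set TopologicalSpace NNReal ENNReal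

/-- A mean on the Borel subsets of a topological space `Z`: a finitely additive
function from the Borel σ-algebra to `[0,1]` with total mass `1`. -/
def IsBorelMean {Z : Type*} [TopologicalSpace Z] (m : Set Z → ℝ) : Prop :=
  (∀ B, MeasurableSet[borel Z] B → 0 ≤ m B ∧ m B ≤ 1) ∧
  m Set.univ = 1 ∧
  ∀ A B, MeasurableSet[borel Z] A → MeasurableSet[borel Z] B → Disjoint A B →
    m (A ∪ B) = m A + m B

section Aux
variable {X : Type*} [TopologicalSpace X] [MeasurableSpace X] [BorelSpace X] {m : Set X → ℝ}

/-- The "outer content" associated to a mean: infimum of `m U` over open `U ⊇ K`. -/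
noncomputable def meanContentFn (m : Set X → ℝ) (K : Set X) : ℝ≥0 :=
  ⨅ U : {U : Set X // IsOpen U ∧ K ⊆ U}, Real.toNNReal (m U)

instance meanContentFn_nonempty (K : Set X) : Nonempty {U : Set X // IsOpen U ∧ K ⊆ U} :=
  ⟨⟨univ, isOpen_univ, subset_univ _⟩⟩

lemma meanContentFn_le {U K : Set X} (hU : IsOpen U) (hKU : K ⊆ U) :
    meanContentFn m K ≤ Real.toNNReal (m U) :=
  ciInf_le (OrderBot.bddBelow _) (⟨U, hU, hKU⟩ : {U : Set X // IsOpen U ∧ K ⊆ U})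

lemma meanContentFn_mono {K₁ K₂ : Set X} (h : K₁ ⊆ K₂) :
    meanContentFn m K₁ ≤ meanContentFn m K₂ :=
  le_ciInf fun U => meanContentFn_le U.2.1 (h.trans U.2.2)

variable (hrange : ∀ B : Set X, MeasurableSet B → 0 ≤ m B ∧ m B ≤ 1)
  (hadd : ∀ A B : Set X, MeasurableSet A → MeasurableSet B → Disjoint A B →
    m (A ∪ B) = m A + m B)

include hrange hadd

lemma mean_mono {A B : Set X} (hA : MeasurableSet A) (hB : MeasurableSet B) (h : A ⊆ B) :
    m A ≤ m B := by
  have h2 : m (A ∪ B \ A) = m A + m (B \ A) :=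
    hadd A (B \ A) hA (hB.diff hA) disjoint_sdiff_self_right
  rw [union_diff_cancel h] at h2
  have := (hrange (B \ A) (hB.diff hA)).1
  linarith

lemma mean_subadd {A B : Set X} (hA : MeasurableSet A) (hB : MeasurableSet B) :
    m (A ∪ B) ≤ m A + m B := by
  have h2 : m (A ∪ B \ A) = m A + m (B \ A) :=
    hadd A (B \ A) hA (hB.diff hA) disjoint_sdiff_self_right
  rw [union_diff_self] at h2
  have := mean_mono hrange hadd (hB.diff hA) hB diff_subset
  linarith

lemma meanContentFn_sup_le {K₁ K₂ : Set X} :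
    meanContentFn m (K₁ ∪ K₂) ≤ meanContentFn m K₁ + meanContentFn m K₂ := by
  refine NNReal.le_iInf_add_iInf fun U V => ?_
  refine le_trans (meanContentFn_le (U.2.1.union V.2.1) (union_subset_union U.2.2 V.2.2)) ?_
  rw [← Real.toNNReal_add (hrange U U.2.1.measurableSet).1 (hrange V V.2.1.measurableSet).1]
  exact Real.toNNReal_le_toNNReal
    (mean_subadd hrange hadd U.2.1.measurableSet V.2.1.measurableSet)

lemma meanContentFn_sup_disjoint [T2Space X] {K₁ K₂ : Set X} (hK₁ : IsCompact K₁)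
    (hK₂ : IsCompact K₂) (hd : Disjoint K₁ K₂) :
    meanContentFn m (K₁ ∪ K₂) = meanContentFn m K₁ + meanContentFn m K₂ := by
  refine le_antisymm (meanContentFn_sup_le hrange hadd) ?_
  refine le_ciInf fun U => ?_
  obtain ⟨V₁, V₂, hV₁, hV₂, hKV₁, hKV₂, hVd⟩ := SeparatedNhds.of_isCompact_isCompact hK₁ hK₂ hd
  have h1 : meanContentFn m K₁ ≤ Real.toNNReal (m (U.1 ∩ V₁)) :=
    meanContentFn_le (U.2.1.inter hV₁) (subset_inter ((subset_union_left).trans U.2.2) hKV₁)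
  have h2 : meanContentFn m K₂ ≤ Real.toNNReal (m (U.1 ∩ V₂)) :=
    meanContentFn_le (U.2.1.inter hV₂) (subset_inter ((subset_union_right).trans U.2.2) hKV₂)
  refine le_trans (add_le_add h1 h2) ?_
  have m1 : MeasurableSet (U.1 ∩ V₁) := (U.2.1.inter hV₁).measurableSet
  have m2 : MeasurableSet (U.1 ∩ V₂) := (U.2.1.inter hV₂).measurableSet
  rw [← Real.toNNReal_add (hrange _ m1).1 (hrange _ m2).1]
  refine Real.toNNReal_le_toNNReal ?_
  rw [← hadd _ _ m1 m2 (hVd.mono inter_subset_right inter_subset_right)]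
  exact mean_mono hrange hadd (m1.union m2) U.2.1.measurableSet
    (union_subset inter_subset_left inter_subset_left)

/-- The content on compact sets associated to a mean. -/
noncomputable def meanContent [T2Space X] : Content X where
  toFun K := meanContentFn m K
  mono' _ _ h := meanContentFn_mono h
  sup_disjoint' K₁ K₂ hd _ _ :=
    meanContentFn_sup_disjoint hrange hadd K₁.2 K₂.2 hd
  sup_le' _ _ := meanContentFn_sup_le hrange hadd

end Aux

theorem statement4 (Γ : Type*) [Group Γ] (X : Type*) [TopologicalSpace X] [CompactSpace X]
    [TopologicalSpace.MetrizableSpace X] [Nonempty X] [MeasurableSpace X] [BorelSpace X]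
    [MulAction Γ X] (hcont : ∀ γ : Γ, Continuous fun x : X => γ • x)
    (m : Set X → ℝ) (hmean : IsBorelMean m)
    (hinv : ∀ (γ : Γ) (B : Set X), MeasurableSet B → m ((fun x => γ • x) '' B) = m B) :
    ∃ μ : Measure X, IsProbabilityMeasure μ ∧
      ∀ (γ : Γ) (B : Set X), MeasurableSet B → μ ((fun x => γ • x) '' B) = μ B := by
  letI := TopologicalSpace.metrizableSpaceMetric X
  obtain ⟨hrange', huniv, hadd'⟩ := hmean
  have hbe := BorelSpace.measurable_eq (α := X)
  have hrange : ∀ B : Set X, MeasurableSet B → 0 ≤ m B ∧ m B ≤ 1 := by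
    intro B hB; exact hrange' B (hbe ▸ hB)
  have hadd : ∀ A B : Set X, MeasurableSet A → MeasurableSet B → Disjoint A B →
      m (A ∪ B) = m A + m B := by
    intro A B hA hB h; exact hadd' A B (hbe ▸ hA) (hbe ▸ hB) h
  set C : Content X := meanContent hrange hadd with hC
  -- invariance of the content function
  have himg : ∀ (γ : Γ) (K : Set X), meanContentFn m ((fun x => γ • x) '' K) ≤
      meanContentFn m K := by
    intro γ K
    refine le_ciInf fun U => ?_
    have hUo : IsOpen ((fun x => γ • x) '' U.1) := by
      have : (fun x => γ • x) '' U.1 = (fun x => γ⁻¹ • x) ⁻¹' U.1 := by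
        ext x
        simp only [mem_image, mem_preimage]
        constructor
        · rintro ⟨y, hy, rfl⟩; simpa [smul_smul] using hy
        · intro hx; exact ⟨γ⁻¹ • x, hx, by simp [smul_smul]⟩
      rw [this]; exact U.2.1.preimage (hcont γ⁻¹)
    have := meanContentFn_le (m := m) hUo (Set.image_mono U.2.2)
    rwa [hinv γ U.1 U.2.1.measurableSet] at this
  have himg_eq : ∀ (γ : Γ) (K : Set X),
      meanContentFn m ((fun x => γ • x) '' K) = meanContentFn m K := by
    intro γ K
    refine le_antisymm (himg γ K) ?_
    have := himg γ⁻¹ ((fun x => γ • x) '' K)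
    have heq : (fun x => γ⁻¹ • x) '' ((fun x => γ • x) '' K) = K := by
      rw [← Set.image_comp]
      simp [Function.comp, smul_smul]
    rwa [heq] at this
  -- invariance of the inner content
  have hinner : ∀ (γ : Γ) (U : Opens X) (hUo : IsOpen ((fun x => γ • x) '' (U : Set X))),
      C.innerContent ⟨_, hUo⟩ = C.innerContent U := by
    intro γ U hUo
    refine le_antisymm ?_ ?_
    · refine iSup₂_le fun K hK => ?_
      have hK' : ((fun x => γ⁻¹ • x) '' K : Set X) ⊆ (U : Set X) := by
        rintro x ⟨y, hy, rfl⟩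
        obtain ⟨z, hz, rfl⟩ := hK hy
        simpa [smul_smul] using hz
      refine le_trans ?_ (C.le_innerContent ⟨_, K.2.image (hcont γ⁻¹)⟩ U hK')
      have : C.toFun K = C.toFun ⟨_, K.2.image (hcont γ⁻¹)⟩ := by
        exact (himg_eq γ⁻¹ K).symm
      exact le_of_eq (by exact_mod_cast congrArg _ this)
    · refine iSup₂_le fun K hK => ?_
      refine le_trans ?_ (C.le_innerContent ⟨_, K.2.image (hcont γ)⟩ ⟨_, hUo⟩
        (Set.image_mono hK))
      have : C.toFun K = C.toFun ⟨_, K.2.image (hcont γ)⟩ := by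
        exact (himg_eq γ K).symm
      exact le_of_eq (by exact_mod_cast congrArg _ this)
  -- invariance of the outer measure
  have houter : ∀ (γ : Γ) (A : Set X),
      C.outerMeasure ((fun x => γ • x) '' A) = C.outerMeasure A := by
    intro γ A
    have key : ∀ (γ : Γ) (A : Set X),
        C.outerMeasure A ≤ C.outerMeasure ((fun x => γ • x) '' A) := by
      intro γ A
      rw [C.outerMeasure_eq_iInf, C.outerMeasure_eq_iInf]
      refine le_iInf fun U => le_iInf fun hU => le_iInf fun hAU => ?_
      have hUo : IsOpen ((fun x => γ⁻¹ • x) '' U) := by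
        have : (fun x => γ⁻¹ • x) '' U = (fun x => γ • x) ⁻¹' U := by
          ext x
          simp only [mem_image, mem_preimage]
          constructor
          · rintro ⟨y, hy, rfl⟩; simpa [smul_smul] using hy
          · intro hx; exact ⟨γ • x, hx, by simp [smul_smul]⟩
        rw [this]; exact hU.preimage (hcont γ)
      have hsub : A ⊆ (fun x => γ⁻¹ • x) '' U := by
        intro x hx
        exact ⟨γ • x, hAU ⟨x, hx, rfl⟩, by simp [smul_smul]⟩
      refine le_trans (iInf_le_of_le _ (iInf_le_of_le hUo (iInf_le _ hsub))) ?_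
      exact le_of_eq (hinner γ⁻¹ ⟨U, hU⟩ hUo)
    refine le_antisymm ?_ (key γ A)
    have := key γ⁻¹ ((fun x => γ • x) '' A)
    have heq : (fun x => γ⁻¹ • x) '' ((fun x => γ • x) '' A) = A := by
      rw [← Set.image_comp]
      simp [Function.comp, smul_smul]
    rwa [heq] at this
  refine ⟨C.measure, ?_, ?_⟩
  · constructor
    rw [C.measure_apply MeasurableSet.univ,
      C.outerMeasure_of_isOpen univ isOpen_univ]
    have h1 : C.innerContent ⟨univ, isOpen_univ⟩ = C ⟨univ, isCompact_univ⟩ := by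
      refine le_antisymm (iSup₂_le fun K _ => ?_) (C.le_innerContent _ _ (subset_univ _))
      exact C.mono K ⟨univ, isCompact_univ⟩ (subset_univ _)
    rw [h1]
    have h2 : C.toFun ⟨univ, isCompact_univ⟩ = 1 := by
      show meanContentFn m univ = 1
      have hone : ∀ U : {U : Set X // IsOpen U ∧ (univ : Set X) ⊆ U},
          Real.toNNReal (m U.1) = 1 := by
        intro U
        have : U.1 = univ := univ_subset_iff.mp U.2.2
        rw [this, huniv]; simp
      unfold meanContentFn
      haveI : Nonempty {U : Set X // IsOpen U ∧ (univ : Set X) ⊆ U} :=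
        ⟨⟨univ, isOpen_univ, subset_rfl⟩⟩
      calc (⨅ U : {U : Set X // IsOpen U ∧ (univ : Set X) ⊆ U}, Real.toNNReal (m U.1))
          = ⨅ _ : {U : Set X // IsOpen U ∧ (univ : Set X) ⊆ U}, (1 : ℝ≥0) := by
            exact congrArg _ (funext hone)
        _ = 1 := ciInf_const
    show (C.toFun ⟨univ, isCompact_univ⟩ : ℝ≥0∞) = 1
    rw [h2]; simp
  · intro γ B hB
    have hBimg : MeasurableSet ((fun x => γ • x) '' B) := by
      have : (fun x => γ • x) '' B = (fun x => γ⁻¹ • x) ⁻¹' B := by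
        ext x
        simp only [mem_image, mem_preimage]
        constructor
        · rintro ⟨y, hy, rfl⟩; simpa [smul_smul] using hy
        · intro hx; exact ⟨γ⁻¹ • x, hx, by simp [smul_smul]⟩
      rw [this]
      exact hB.preimage (hcont γ⁻¹).measurable
    rw [C.measure_apply hBimg, C.measure_apply hB, houter γ B]
end

section
/- Let n ≥ 1, let Γ be a finitely generated group and ρ : Γ → GL_n(ℝ) a linear representation. Equip G = ℝ^n ⋊_ρ Γ with the word length |·|_S associated to a compact symmetric generating set S containing the identity. Then the set Exp_Γ(ℝ^n) of all exponentially distorted vectors v ∈ ℝ^n is an ℝ-linear subspace of ℝ^n, and it is invariant under ρ(γ) for every γ ∈ Γ. -/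
/-!
Statement 5: for a finitely generated group `Γ` and `ρ : Γ → GL_n(ℝ)`, the set of
exponentially distorted vectors of `ℝ^n` in `G = ℝ^n ⋊_ρ Γ` (word length taken with respect
to a compact symmetric generating set containing the identity) is an `ℝ`-linear subspace
of `ℝ^n`, invariant under every `ρ(γ)`.
-/

open Matrix Pointwise

noncomputable section

/-- The automorphism of `Multiplicative ℝ^n` given by a matrix in `GL_n(ℝ)`. -/
def glAut {n : ℕ} (A : GL (Fin n) ℝ) :
    MulAut (Multiplicative (Fin n → ℝ)) :=
  AddEquiv.toMultiplicative
    { toFun := fun v => (A : Matrix (Fin n) (Fin n) ℝ).mulVec v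
      invFun := fun v => ((A⁻¹ : GL (Fin n) ℝ) : Matrix (Fin n) (Fin n) ℝ).mulVec v
      left_inv := fun v => by
        show ((A⁻¹ : GL (Fin n) ℝ) : Matrix (Fin n) (Fin n) ℝ).mulVec
          ((A : Matrix (Fin n) (Fin n) ℝ).mulVec v) = v
        rw [Matrix.mulVec_mulVec, ← Units.val_mul, inv_mul_cancel, Units.val_one,
          Matrix.one_mulVec]
      right_inv := fun v => by
        show ((A : GL (Fin n) ℝ) : Matrix (Fin n) (Fin n) ℝ).mulVec
          (((A⁻¹ : GL (Fin n) ℝ) : Matrix (Fin n) (Fin n) ℝ).mulVec v) = v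
        rw [Matrix.mulVec_mulVec, ← Units.val_mul, mul_inv_cancel, Units.val_one,
          Matrix.one_mulVec]
      map_add' := fun v w => by simp [Matrix.mulVec_add] }

/-- The action of `GL_n(ℝ)` on `Multiplicative ℝ^n`, as a homomorphism to the
automorphism group. -/
def glHom {n : ℕ} : GL (Fin n) ℝ →* MulAut (Multiplicative (Fin n → ℝ)) where
  toFun := glAut
  map_one' := by
    apply DFunLike.ext
    intro v
    show ((1 : GL (Fin n) ℝ) : Matrix (Fin n) (Fin n) ℝ).mulVec v = v
    simp
    exact Matrix.one_mulVec _
  map_mul' := fun A B => by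
    apply DFunLike.ext
    intro v
    show ((A * B : GL (Fin n) ℝ) : Matrix (Fin n) (Fin n) ℝ).mulVec v
      = (A : Matrix (Fin n) (Fin n) ℝ).mulVec ((B : Matrix (Fin n) (Fin n) ℝ).mulVec v)
    simp [Matrix.mulVec_mulVec]
    exact (Matrix.mulVec_mulVec _ _ _).symm

/-- Product topology on a semidirect product. -/
instance semidirectTopology {N H : Type*} [Group N] [Group H] [TopologicalSpace N]
    [TopologicalSpace H] {φ : H →* MulAut N} : TopologicalSpace (N ⋊[φ] H) :=
  TopologicalSpace.induced (fun g => (g.left, g.right)) inferInstance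

/-- Word length with respect to a generating set `S`. -/
def wordLength {G : Type*} [Group G] (S : Set G) (g : G) : ℕ :=
  sInf {m : ℕ | g ∈ S ^ m}


/-- `v` is exponentially distorted in `ℝ^n ⋊_ρ Γ`: the word length of `m·v` grows at most
logarithmically in `m`. -/
def ExpDistorted {n : ℕ} {Γ : Type*} [Group Γ] (ρ : Γ →* GL (Fin n) ℝ)
    (S : Set (Multiplicative (Fin n → ℝ) ⋊[glHom.comp ρ] Γ)) (v : Fin n → ℝ) : Prop :=
  ∃ C : ℝ, 0 < C ∧ ∀ m : ℕ, 2 ≤ m →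
    (wordLength S (SemidirectProduct.inl (Multiplicative.ofAdd (m • v))) : ℝ) ≤
      C * Real.log m

section Top
variable {N H : Type*} [Group N] [Group H] [TopologicalSpace N]
    [TopologicalSpace H] {φ : H →* MulAut N}

lemma cont_e : Continuous (fun g : N ⋊[φ] H => (g.left, g.right)) := continuous_induced_dom

lemma cont_left : Continuous (fun g : N ⋊[φ] H => g.left) := (continuous_fst).comp cont_e
lemma cont_right : Continuous (fun g : N ⋊[φ] H => g.right) := (continuous_snd).comp cont_e

lemma cont_of_discrete {X Y Z : Type*} [TopologicalSpace X] [DiscreteTopology X]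
    [TopologicalSpace Y] [TopologicalSpace Z] (f : X × Y → Z)
    (h : ∀ x, Continuous fun y => f (x, y)) : Continuous f := by
  rw [continuous_iff_continuousAt]
  rintro ⟨x, y⟩
  unfold ContinuousAt
  rw [nhds_prod_eq, nhds_discrete, Filter.pure_prod, Filter.tendsto_map'_iff]
  exact (h x).tendsto y

instance sdT2 [T2Space N] [T2Space H] : T2Space (N ⋊[φ] H) := by
  apply Topology.IsEmbedding.t2Space (f := fun g : N ⋊[φ] H => (g.left, g.right))
  refine ⟨⟨rfl⟩, fun a b hab => ?_⟩
  simp only [Prod.mk.injEq] at hab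
  exact SemidirectProduct.ext hab.1 hab.2

lemma sdContMul [IsTopologicalGroup N] [DiscreteTopology H]
    (hφ : ∀ h : H, Continuous (φ h)) : ContinuousMul (N ⋊[φ] H) := by
  constructor
  apply continuous_induced_rng.2
  simp only [Function.comp_def, SemidirectProduct.mul_left, SemidirectProduct.mul_right]
  apply Continuous.prodMk
  · apply Continuous.mul (cont_left.comp continuous_fst)
    have : Continuous fun p : H × N => φ p.1 p.2 :=
      cont_of_discrete _ fun h => hφ h
    exact this.comp ((cont_right.comp continuous_fst).prodMk (cont_left.comp continuous_snd))
  · exact (continuous_of_discreteTopology (α := H × H) (f := fun p => p.1 * p.2)).comp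
      ((cont_right.comp continuous_fst).prodMk (cont_right.comp continuous_snd))
end Top

section Specific
variable {n : ℕ} {Γ : Type*} [Group Γ] [TopologicalSpace Γ] [DiscreteTopology Γ]
  {ρ : Γ →* GL (Fin n) ℝ}

lemma cont_glAut (A : GL (Fin n) ℝ) : Continuous (glAut A) := by
  show Continuous fun v : Fin n → ℝ => (A : Matrix (Fin n) (Fin n) ℝ).mulVec v
  exact (continuous_const (y := (A : Matrix (Fin n) (Fin n) ℝ))).matrix_mulVec continuous_id

lemma sd_contMul : ContinuousMul (Multiplicative (Fin n → ℝ) ⋊[glHom.comp ρ] Γ) :=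
  sdContMul (fun γ => cont_glAut (ρ γ))

lemma isCompact_pow {S : Set (Multiplicative (Fin n → ℝ) ⋊[glHom.comp ρ] Γ)}
    (hS : IsCompact S) (m : ℕ) : IsCompact (S ^ m) := by
  have := sd_contMul (ρ := ρ)
  induction m with
  | zero => rw [pow_zero]; exact isCompact_singleton
  | succ k ih => rw [pow_succ]; exact ih.mul hS

lemma isClosed_pow {S : Set (Multiplicative (Fin n → ℝ) ⋊[glHom.comp ρ] Γ)}
    (hS : IsCompact S) (m : ℕ) : IsClosed (S ^ m) :=
  (isCompact_pow hS m).isClosed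

lemma cont_phiv (v : Fin n → ℝ) :
    Continuous (fun t : ℝ => (SemidirectProduct.inl (Multiplicative.ofAdd (t • v)) :
      Multiplicative (Fin n → ℝ) ⋊[glHom.comp ρ] Γ)) := by
  apply continuous_induced_rng.2
  simp only [Function.comp_def, SemidirectProduct.left_inl, SemidirectProduct.right_inl]
  refine Continuous.prodMk ?_ continuous_const
  show Continuous fun t : ℝ => t • v
  exact continuous_id.smul continuous_const
end Specific

-- word length lemmas
section WL
variable {G : Type*} [Group G] {S : Set G}

lemma wl_le {g : G} {m : ℕ} (h : g ∈ S ^ m) : wordLength S g ≤ m := Nat.sInf_le h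

lemma wl_mem (hgen : ∀ g : G, ∃ m, g ∈ S ^ m) (g : G) : g ∈ S ^ wordLength S g :=
  Nat.sInf_mem (hgen g)

lemma wl_one : wordLength S 1 = 0 :=
  Nat.le_zero.mp (wl_le (by simp [pow_zero]))

lemma wl_mul (hgen : ∀ g : G, ∃ m, g ∈ S ^ m) (g h : G) :
    wordLength S (g * h) ≤ wordLength S g + wordLength S h :=
  wl_le (by rw [pow_add]; exact Set.mul_mem_mul (wl_mem hgen g) (wl_mem hgen h))

lemma wl_inv (hgen : ∀ g : G, ∃ m, g ∈ S ^ m) (hSsymm : S⁻¹ = S) (g : G) :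
    wordLength S g⁻¹ ≤ wordLength S g := by
  have h : g⁻¹ ∈ (S ^ wordLength S g)⁻¹ := by
    rw [Set.mem_inv, inv_inv]; exact wl_mem hgen g
  rw [← inv_pow, hSsymm] at h
  exact wl_le h

lemma wl_pow (hgen : ∀ g : G, ∃ m, g ∈ S ^ m) (g : G) (k : ℕ) :
    wordLength S (g ^ k) ≤ k * wordLength S g := by
  induction k with
  | zero => simp [wl_one]
  | succ j ih =>
    rw [pow_succ, add_mul, one_mul]
    exact le_trans (wl_mul hgen _ _) (by omega)
end WL

section Core
set_option linter.unusedSectionVars false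
variable {n : ℕ} {Γ : Type*} [Group Γ] [TopologicalSpace Γ] [DiscreteTopology Γ]
  {ρ : Γ →* GL (Fin n) ℝ} {S : Set (Multiplicative (Fin n → ℝ) ⋊[glHom.comp ρ] Γ)}

/-- the one-parameter subgroup through `v`. -/
def elt (ρ : Γ →* GL (Fin n) ℝ) (v : Fin n → ℝ) (t : ℝ) :
    Multiplicative (Fin n → ℝ) ⋊[glHom.comp ρ] Γ :=
  SemidirectProduct.inl (Multiplicative.ofAdd (t • v))

lemma elt_add (v : Fin n → ℝ) (s t : ℝ) :
    elt ρ v (s + t) = elt ρ v s * elt ρ v t := by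
  unfold elt; rw [add_smul, ofAdd_add, _root_.map_mul]

lemma elt_neg (v : Fin n → ℝ) (t : ℝ) : elt ρ v (-t) = (elt ρ v t)⁻¹ := by
  unfold elt; rw [neg_smul, ofAdd_neg, _root_.map_inv]

lemma elt_nsmul (v : Fin n → ℝ) (k : ℕ) (t : ℝ) :
    elt ρ v ((k : ℝ) * t) = (elt ρ v t) ^ k := by
  unfold elt; rw [mul_smul, Nat.cast_smul_eq_nsmul, ofAdd_nsmul, _root_.map_pow]

lemma elt_nat (v : Fin n → ℝ) (k : ℕ) :
    elt ρ v (k : ℝ) = SemidirectProduct.inl (Multiplicative.ofAdd (k • v)) := by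
  unfold elt; rw [Nat.cast_smul_eq_nsmul]

lemma wl_elt_abs (hSgen : ∀ g : Multiplicative (Fin n → ℝ) ⋊[glHom.comp ρ] Γ, ∃ m : ℕ, g ∈ S ^ m)
    (hSsymm : S⁻¹ = S) (v : Fin n → ℝ) (t : ℝ) :
    wordLength S (elt ρ v t) ≤ wordLength S (elt ρ v |t|) := by
  rcases abs_cases t with ⟨h1, _⟩ | ⟨h1, _⟩
  · rw [h1]
  · rw [h1]
    conv_lhs => rw [show t = -(-t) by ring, elt_neg]
    exact wl_inv hSgen hSsymm _

/-- Baire-type bound: the word length of `t • v`, `|t| ≤ 1`, is uniformly bounded. -/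
lemma bounded_N (hSsymm : S⁻¹ = S) (hScompact : IsCompact S)
    (hSgen : ∀ g : Multiplicative (Fin n → ℝ) ⋊[glHom.comp ρ] Γ, ∃ m : ℕ, g ∈ S ^ m)
    (v : Fin n → ℝ) :
    ∃ B : ℕ, ∀ t : ℝ, |t| ≤ 1 → wordLength S (elt ρ v t) ≤ B := by
  obtain ⟨m0, t0, ht0⟩ := nonempty_interior_of_iUnion_of_closed
      (f := fun m : ℕ => (fun t : ℝ => elt ρ v t) ⁻¹' (S ^ m))
      (fun m => (isClosed_pow hScompact m).preimage (cont_phiv v))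
      (Set.eq_univ_iff_forall.2 fun t => Set.mem_iUnion.2 (hSgen (elt ρ v t)))
  rw [mem_interior_iff_mem_nhds, Metric.mem_nhds_iff] at ht0
  obtain ⟨ε, hε, hball⟩ := ht0
  have hsmall : ∀ s : ℝ, |s| < ε → wordLength S (elt ρ v s) ≤ 2 * m0 := by
    intro s hs
    have h1 : elt ρ v (t0 + s) ∈ S ^ m0 := by
      apply hball
      simp only [Metric.mem_ball, Real.dist_eq]
      simpa using hs
    have h2 : elt ρ v t0 ∈ S ^ m0 := by
      apply hball; simp [Metric.mem_ball, hε]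
    have he : elt ρ v s = elt ρ v (t0 + s) * (elt ρ v t0)⁻¹ := by
      rw [← elt_neg, ← elt_add]; ring_nf
    rw [he]
    calc wordLength S (elt ρ v (t0 + s) * (elt ρ v t0)⁻¹)
        ≤ wordLength S (elt ρ v (t0 + s)) + wordLength S (elt ρ v t0)⁻¹ :=
          wl_mul hSgen _ _
      _ ≤ m0 + m0 := Nat.add_le_add (wl_le h1) (le_trans (wl_inv hSgen hSsymm _) (wl_le h2))
      _ = 2 * m0 := by ring
  set k := ⌊1/ε⌋₊ + 1 with hkdef
  refine ⟨k * (2 * m0), fun t ht => ?_⟩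
  have hk : (1:ℝ)/ε < k := by
    have := Nat.lt_floor_add_one (1/ε)
    rw [hkdef]
    push_cast
    linarith
  have hkpos : (0:ℝ) < k := lt_trans (by positivity) hk
  have habs : |t / (k:ℝ)| < ε := by
    rw [abs_div, abs_of_pos hkpos]
    rw [div_lt_iff₀ hkpos]
    rw [div_lt_iff₀ hε] at hk
    nlinarith
  have he : elt ρ v t = (elt ρ v (t / k)) ^ k := by
    rw [← elt_nsmul]
    congr 1
    field_simp
  rw [he]
  exact le_trans (wl_pow hSgen _ k) (Nat.mul_le_mul_left k (hsmall _ habs))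
end Core

section Closure
set_option linter.unusedSectionVars false
variable {n : ℕ} {Γ : Type*} [Group Γ] [TopologicalSpace Γ] [DiscreteTopology Γ]
  {ρ : Γ →* GL (Fin n) ℝ} {S : Set (Multiplicative (Fin n → ℝ) ⋊[glHom.comp ρ] Γ)}

lemma log2_pos : (0:ℝ) < Real.log 2 := Real.log_pos (by norm_num)

lemma logm_ge {m : ℕ} (hm : 2 ≤ m) : Real.log 2 ≤ Real.log m :=
  Real.log_le_log (by norm_num) (by exact_mod_cast hm)

lemma expdist_zero (hS1 : (1 : Multiplicative (Fin n → ℝ) ⋊[glHom.comp ρ] Γ) ∈ S) :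
    ExpDistorted ρ S 0 := by
  refine ⟨1, one_pos, fun m hm => ?_⟩
  have h : (SemidirectProduct.inl (Multiplicative.ofAdd (m • (0 : Fin n → ℝ))) :
      Multiplicative (Fin n → ℝ) ⋊[glHom.comp ρ] Γ) = 1 := by
    rw [smul_zero, ofAdd_zero, _root_.map_one]
  rw [h, wl_one]
  have : (0:ℝ) ≤ Real.log m := Real.log_nonneg (by exact_mod_cast Nat.one_le_of_lt hm)
  simpa using this

lemma expdist_add
    (hSgen : ∀ g : Multiplicative (Fin n → ℝ) ⋊[glHom.comp ρ] Γ, ∃ m : ℕ, g ∈ S ^ m)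
    {v w : Fin n → ℝ} (hv : ExpDistorted ρ S v) (hw : ExpDistorted ρ S w) :
    ExpDistorted ρ S (v + w) := by
  obtain ⟨C1, hC1, h1⟩ := hv
  obtain ⟨C2, hC2, h2⟩ := hw
  refine ⟨C1 + C2, by positivity, fun m hm => ?_⟩
  have he : (SemidirectProduct.inl (Multiplicative.ofAdd (m • (v + w))) :
      Multiplicative (Fin n → ℝ) ⋊[glHom.comp ρ] Γ) =
      SemidirectProduct.inl (Multiplicative.ofAdd (m • v)) *
      SemidirectProduct.inl (Multiplicative.ofAdd (m • w)) := by
    rw [smul_add, ofAdd_add, _root_.map_mul]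
  rw [he]
  have hle := wl_mul hSgen (SemidirectProduct.inl (Multiplicative.ofAdd (m • v)))
    (SemidirectProduct.inl (Multiplicative.ofAdd (m • w)))
  calc (wordLength S (SemidirectProduct.inl (Multiplicative.ofAdd (m • v)) *
        SemidirectProduct.inl (Multiplicative.ofAdd (m • w))) : ℝ)
      ≤ (wordLength S (SemidirectProduct.inl (Multiplicative.ofAdd (m • v))) : ℝ) +
        (wordLength S (SemidirectProduct.inl (Multiplicative.ofAdd (m • w))) : ℝ) := by
        exact_mod_cast hle
    _ ≤ C1 * Real.log m + C2 * Real.log m := add_le_add (h1 m hm) (h2 m hm)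
    _ = (C1 + C2) * Real.log m := by ring

lemma expdist_smul (hSsymm : S⁻¹ = S) (hScompact : IsCompact S)
    (hSgen : ∀ g : Multiplicative (Fin n → ℝ) ⋊[glHom.comp ρ] Γ, ∃ m : ℕ, g ∈ S ^ m)
    (c : ℝ) {v : Fin n → ℝ} (hv : ExpDistorted ρ S v) :
    ExpDistorted ρ S (c • v) := by
  obtain ⟨C, hC, hle⟩ := hv
  obtain ⟨B, hB⟩ := bounded_N hSsymm hScompact hSgen v
  have hlog2 := log2_pos
  have hlogc : 0 ≤ Real.log (|c| + 1) := Real.log_nonneg (by linarith [abs_nonneg c])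
  set D : ℝ := C * Real.log (|c| + 1) + 2 * B + 1 with hD
  have hDpos : 0 < D := by rw [hD]; positivity
  refine ⟨C + D / Real.log 2, by
    have := div_pos hDpos hlog2; linarith, fun m hm => ?_⟩
  have hlogm := logm_ge hm
  have hlogm0 : (0:ℝ) < Real.log m := lt_of_lt_of_le hlog2 hlogm
  have hkey : D ≤ D / Real.log 2 * Real.log m := by
    rw [div_mul_eq_mul_div, le_div_iff₀ hlog2]
    exact mul_le_mul_of_nonneg_left hlogm hDpos.le
  -- rewrite the element as elt ρ v (m * c)
  have he : (SemidirectProduct.inl (Multiplicative.ofAdd (m • (c • v))) :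
      Multiplicative (Fin n → ℝ) ⋊[glHom.comp ρ] Γ) = elt ρ v ((m:ℝ) * c) := by
    unfold elt
    rw [mul_smul, Nat.cast_smul_eq_nsmul]
  rw [he]
  -- reduce to |m * c|
  set x : ℝ := (m:ℝ) * |c| with hx
  have hxnn : 0 ≤ x := by positivity
  have habs : |(m:ℝ) * c| = x := by rw [abs_mul, Nat.abs_cast]
  set k : ℕ := ⌊x⌋₊ with hk
  set r : ℝ := x - k with hr
  have hr0 : 0 ≤ r := by
    have := Nat.floor_le hxnn
    simp [hr]; linarith
  have hr1 : r ≤ 1 := by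
    have := Nat.lt_floor_add_one x
    simp [hr]; linarith
  have hNr : wordLength S (elt ρ v r) ≤ B := hB r (by rw [abs_of_nonneg hr0]; exact hr1)
  have step1 : wordLength S (elt ρ v ((m:ℝ) * c)) ≤ wordLength S (elt ρ v x) := by
    have := wl_elt_abs hSgen hSsymm v ((m:ℝ) * c)
    rwa [habs] at this
  have step2 : wordLength S (elt ρ v x) ≤ wordLength S (elt ρ v (k:ℝ)) + B := by
    have hxe : x = (k:ℝ) + r := by rw [hr]; ring
    calc wordLength S (elt ρ v x) = wordLength S (elt ρ v ((k:ℝ) + r)) := by rw [← hxe]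
      _ ≤ wordLength S (elt ρ v (k:ℝ)) + wordLength S (elt ρ v r) := by
          rw [elt_add]; exact wl_mul hSgen _ _
      _ ≤ wordLength S (elt ρ v (k:ℝ)) + B := by omega
  -- bound on N k
  have hkx : (k:ℝ) ≤ x := Nat.floor_le hxnn
  have step3 : (wordLength S (elt ρ v (k:ℝ)) : ℝ) ≤ C * Real.log (|c| + 1) + C * Real.log m + B := by
    by_cases hk2 : 2 ≤ k
    · have h1 : (wordLength S (elt ρ v (k:ℝ)) : ℝ) ≤ C * Real.log k := by
        rw [elt_nat]; exact hle k hk2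
      have hkpos : (0:ℝ) < k := by exact_mod_cast Nat.lt_of_lt_of_le (by norm_num) hk2
      have h2 : Real.log k ≤ Real.log ((|c| + 1) * m) := by
        apply Real.log_le_log hkpos
        have : x ≤ (|c| + 1) * m := by
          rw [hx]; nlinarith [abs_nonneg c, Nat.cast_nonneg (α := ℝ) m]
        linarith
      have h3 : Real.log ((|c| + 1) * m) = Real.log (|c| + 1) + Real.log m := by
        apply Real.log_mul (by positivity)
        have : (2:ℝ) ≤ m := by exact_mod_cast hm
        positivity
      have hB0 : (0:ℝ) ≤ B := Nat.cast_nonneg B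
      nlinarith [h1, h2, h3]
    · have hk1 : |((k:ℝ))| ≤ 1 := by
        rw [Nat.abs_cast]
        exact_mod_cast Nat.lt_succ_iff.mp (by omega)
      have := hB (k:ℝ) hk1
      have h1 : (wordLength S (elt ρ v (k:ℝ)) : ℝ) ≤ B := by exact_mod_cast this
      nlinarith [Real.log_nonneg (show (1:ℝ) ≤ m by exact_mod_cast Nat.one_le_of_lt hm)]
  -- combine
  have hfin : (wordLength S (elt ρ v ((m:ℝ) * c)) : ℝ) ≤
      C * Real.log (|c| + 1) + C * Real.log m + 2 * B := by
    have c1 : (wordLength S (elt ρ v ((m:ℝ) * c)) : ℝ) ≤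
        (wordLength S (elt ρ v (k:ℝ)) : ℝ) + B := by
      exact_mod_cast le_trans step1 step2
    linarith
  calc (wordLength S (elt ρ v ((m:ℝ) * c)) : ℝ)
      ≤ C * Real.log (|c| + 1) + C * Real.log m + 2 * B := hfin
    _ ≤ C * Real.log m + D / Real.log 2 * Real.log m := by
        rw [hD] at hkey ⊢; linarith
    _ = (C + D / Real.log 2) * Real.log m := by ring

lemma expdist_aut
    (hSgen : ∀ g : Multiplicative (Fin n → ℝ) ⋊[glHom.comp ρ] Γ, ∃ m : ℕ, g ∈ S ^ m)
    (hSsymm : S⁻¹ = S) (γ : Γ) {v : Fin n → ℝ} (hv : ExpDistorted ρ S v) :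
    ExpDistorted ρ S ((ρ γ : Matrix (Fin n) (Fin n) ℝ).mulVec v) := by
  obtain ⟨C, hC, hle⟩ := hv
  set K : ℕ := wordLength S (SemidirectProduct.inr γ) with hK
  have hlog2 := log2_pos
  refine ⟨C + (2 * K + 1) / Real.log 2, by positivity, fun m hm => ?_⟩
  have hlogm := logm_ge hm
  have he : (SemidirectProduct.inl
        (Multiplicative.ofAdd (m • (ρ γ : Matrix (Fin n) (Fin n) ℝ).mulVec v)) :
        Multiplicative (Fin n → ℝ) ⋊[glHom.comp ρ] Γ) =
      SemidirectProduct.inr γ * SemidirectProduct.inl (Multiplicative.ofAdd (m • v)) *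
        (SemidirectProduct.inr γ)⁻¹ := by
    rw [← _root_.map_inv SemidirectProduct.inr γ, ← SemidirectProduct.inl_aut]
    congr 1
    show Multiplicative.ofAdd (m • (ρ γ : Matrix (Fin n) (Fin n) ℝ).mulVec v) =
      Multiplicative.ofAdd ((ρ γ : Matrix (Fin n) (Fin n) ℝ).mulVec (m • v))
    rw [Matrix.mulVec_smul]
  rw [he]
  have h1 : wordLength S (SemidirectProduct.inr γ *
      SemidirectProduct.inl (Multiplicative.ofAdd (m • v)) * (SemidirectProduct.inr γ)⁻¹) ≤
      K + wordLength S (SemidirectProduct.inl (Multiplicative.ofAdd (m • v))) + K :=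
    calc wordLength S (SemidirectProduct.inr γ *
        SemidirectProduct.inl (Multiplicative.ofAdd (m • v)) * (SemidirectProduct.inr γ)⁻¹)
        ≤ wordLength S (SemidirectProduct.inr γ *
            SemidirectProduct.inl (Multiplicative.ofAdd (m • v))) +
          wordLength S (SemidirectProduct.inr γ)⁻¹ := wl_mul hSgen _ _
      _ ≤ K + wordLength S (SemidirectProduct.inl (Multiplicative.ofAdd (m • v))) + K :=
          Nat.add_le_add (wl_mul hSgen _ _) (wl_inv hSgen hSsymm _)
  have h2 : (wordLength S (SemidirectProduct.inr γ *
      SemidirectProduct.inl (Multiplicative.ofAdd (m • v)) * (SemidirectProduct.inr γ)⁻¹) : ℝ) ≤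
      (K:ℝ) + (wordLength S (SemidirectProduct.inl (Multiplicative.ofAdd (m • v))) : ℝ) + K := by
    exact_mod_cast h1
  have hkey : (2 * K + 1 : ℝ) ≤ (2 * K + 1) / Real.log 2 * Real.log m := by
    rw [div_mul_eq_mul_div, le_div_iff₀ hlog2]
    have : (0:ℝ) ≤ 2 * K + 1 := by positivity
    nlinarith
  calc (wordLength S (SemidirectProduct.inr γ *
      SemidirectProduct.inl (Multiplicative.ofAdd (m • v)) * (SemidirectProduct.inr γ)⁻¹) : ℝ)
      ≤ (K:ℝ) + C * Real.log m + K := by linarith [hle m hm]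
    _ ≤ (C + (2 * K + 1) / Real.log 2) * Real.log m := by nlinarith [hle m hm]
end Closure


theorem statement5 (n : ℕ) (hn : 1 ≤ n) (Γ : Type*) [Group Γ] [TopologicalSpace Γ]
    [DiscreteTopology Γ] (hΓ : Group.FG Γ) (ρ : Γ →* GL (Fin n) ℝ)
    (S : Set (Multiplicative (Fin n → ℝ) ⋊[glHom.comp ρ] Γ))
    (hS1 : (1 : Multiplicative (Fin n → ℝ) ⋊[glHom.comp ρ] Γ) ∈ S)
    (hSsymm : S⁻¹ = S) (hScompact : IsCompact S)
    (hSgen : ∀ g : Multiplicative (Fin n → ℝ) ⋊[glHom.comp ρ] Γ, ∃ m : ℕ, g ∈ S ^ m) :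
    ∃ W : Submodule ℝ (Fin n → ℝ),
      (W : Set (Fin n → ℝ)) = {v : Fin n → ℝ | ExpDistorted ρ S v} ∧
      ∀ (γ : Γ) (v : Fin n → ℝ), v ∈ W →
        (ρ γ : Matrix (Fin n) (Fin n) ℝ).mulVec v ∈ W := by
  refine ⟨{ carrier := {v : Fin n → ℝ | ExpDistorted ρ S v}
            add_mem' := fun hv hw => expdist_add hSgen hv hw
            zero_mem' := expdist_zero hS1
            smul_mem' := fun c v hv => expdist_smul hSsymm hScompact hSgen c hv },
    rfl, fun γ v hv => expdist_aut hSgen hSsymm γ hv⟩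


end
end

section
/- Let n ≥ 1, let Γ be a finitely generated group and ρ : Γ → GL_n(ℝ) a linear representation, and let H denote the closure of ρ(Γ) in GL_n(ℝ). Assume there exists a finitely generated subgroup Λ ⊆ Γ such that ρ(Λ) is a cocompact lattice in H, i.e. ρ(Λ) is a discrete subgroup of H and there is a compact subset K ⊆ H with ρ(Λ)·K = H. Equip G₁ = ℝ^n ⋊_ρ Γ and G₂ = ℝ^n ⋊ H with word lengths |·|_{S₁}, |·|_{S₂} associated to compact symmetric generating sets containing the identity. Then there exists C ≥ 1 such that for every v ∈ ℝ^n: C^{-1}·|(v,1)|_{S₂} − C ≤ |(v,1)|_{S₁} ≤ C·|(v,1)|_{S₂} + C. In other words, the canonical homomorphism ℝ^n ⋊_ρ Γ → ℝ^n ⋊ H is a quasi-isometry in restriction to ℝ^n. -/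
/-!
Statement 8: if `ρ(Λ)` is a cocompact lattice in `H = closure (ρ(Γ))` for some finitely
generated subgroup `Λ ≤ Γ`, then the canonical homomorphism `ℝ^n ⋊_ρ Γ → ℝ^n ⋊ H` is a
quasi-isometry in restriction to `ℝ^n` (for word lengths given by compact symmetric
generating sets containing the identity).
-/

open Matrix Pointwise

noncomputable section

section Infra

open SemidirectProduct Set

/-! ### Topology of semidirect products -/

variable {N K : Type*} [Group N] [Group K] [TopologicalSpace N] [TopologicalSpace K]
  {φ : K →* MulAut N}

theorem sdp_isInducing :
    Topology.IsInducing (fun g : N ⋊[φ] K => (g.left, g.right)) := ⟨rfl⟩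

theorem sdp_continuous_left : Continuous (SemidirectProduct.left : N ⋊[φ] K → N) :=
  continuous_fst.comp sdp_isInducing.continuous

theorem sdp_continuous_right : Continuous (SemidirectProduct.right : N ⋊[φ] K → K) :=
  continuous_snd.comp sdp_isInducing.continuous

theorem sdp_continuous_mk {X : Type*} [TopologicalSpace X] {f : X → N ⋊[φ] K}
    (h1 : Continuous fun x => (f x).left) (h2 : Continuous fun x => (f x).right) :
    Continuous f :=
  sdp_isInducing.continuous_iff.2 (h1.prodMk h2)

/-- The semidirect product is homeomorphic to the topological product. -/
def sdpHomeo : (N ⋊[φ] K) ≃ₜ N × K :=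
  Equiv.toHomeomorphOfIsInducing
    { toFun := fun g => (g.left, g.right)
      invFun := fun p => ⟨p.1, p.2⟩
      left_inv := fun g => rfl
      right_inv := fun p => rfl }
    sdp_isInducing

theorem sdp_topologicalGroup [IsTopologicalGroup N] [IsTopologicalGroup K]
    (hφ : Continuous fun p : K × N => φ p.1 p.2) :
    IsTopologicalGroup (N ⋊[φ] K) where
  continuous_mul := by
    apply sdp_continuous_mk
    · simp only [SemidirectProduct.mul_left]
      exact ((sdp_continuous_left.comp continuous_fst)).mul
        (hφ.comp (((sdp_continuous_right.comp continuous_fst)).prodMk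
          (sdp_continuous_left.comp continuous_snd)))
    · simp only [SemidirectProduct.mul_right]
      exact (sdp_continuous_right.comp continuous_fst).mul
        (sdp_continuous_right.comp continuous_snd)
  continuous_inv := by
    apply sdp_continuous_mk
    · simp only [SemidirectProduct.inv_left]
      exact hφ.comp ((sdp_continuous_right.inv).prodMk (sdp_continuous_left.inv))
    · simp only [SemidirectProduct.inv_right]
      exact sdp_continuous_right.inv

end Infra
section Infra2

open Set Pointwise Filter

variable {G : Type*} [Group G] [TopologicalSpace G]

theorem my_isCompact_pow [IsTopologicalGroup G] {S : Set G} (hS : IsCompact S) :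
    ∀ m : ℕ, IsCompact (S ^ m)
  | 0 => by
    rw [pow_zero, show (1 : Set G) = {1} from rfl]
    exact isCompact_singleton
  | (m + 1) => by
    rw [pow_succ]
    exact (my_isCompact_pow hS m).mul hS

/-- Absorption: any compact set is contained in some power of a compact generating set. -/
theorem my_absorb [IsTopologicalGroup G] [LocallyCompactSpace G] [T2Space G]
    {S : Set G} (h1 : (1 : G) ∈ S) (hsymm : S⁻¹ = S) (hS : IsCompact S)
    (hgen : ∀ g : G, ∃ m : ℕ, g ∈ S ^ m) {C : Set G} (hC : IsCompact C) :
    ∃ k : ℕ, C ⊆ S ^ k := by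
  have hmono : ∀ {a b : ℕ}, a ≤ b → S ^ a ⊆ S ^ b := fun hab =>
    Set.pow_subset_pow_right h1 hab
  have hcover : ⋃ m : ℕ, S ^ m = Set.univ := by
    ext g; simpa using hgen g
  obtain ⟨m₀, u, hu⟩ : ∃ m₀ : ℕ, ∃ u, u ∈ interior (S ^ m₀) := by
    obtain ⟨m₀, hm₀⟩ := nonempty_interior_of_iUnion_of_closed
      (fun m => (my_isCompact_pow hS m).isClosed) hcover
    exact ⟨m₀, hm₀⟩
  -- cover C by left translates of `u⁻¹ • interior (S ^ m₀)`
  set U : Set G := interior (S ^ m₀) with hU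
  have hUopen : IsOpen U := isOpen_interior
  have hcov : C ⊆ ⋃ g : C, (g * u⁻¹) • U := by
    intro x hx
    refine Set.mem_iUnion.2 ⟨⟨x, hx⟩, ?_⟩
    refine ⟨u, hu, ?_⟩
    simp [smul_eq_mul, mul_assoc]
  obtain ⟨t, ht⟩ := hC.elim_finite_subcover (fun g : C => (g * u⁻¹) • U)
    (fun g => hUopen.smul _) hcov
  -- choose powers containing each translate
  classical
  have hmem : ∀ g : C, ∃ m : ℕ, (g : G) ∈ S ^ m := fun g => hgen (g : G)
  set M : ℕ := t.sup (fun g => (hmem g).choose) with hM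
  refine ⟨M + (m₀ + m₀), ?_⟩
  intro x hx
  obtain ⟨g, hgt, hgx⟩ := Set.mem_iUnion₂.1 (ht hx)
  obtain ⟨w, hw, hxw⟩ := hgx
  have hg : (g : G) ∈ S ^ M := hmono (Finset.le_sup hgt) (hmem g).choose_spec
  have huinv : u⁻¹ ∈ S ^ m₀ := by
    have hu' : u ∈ S ^ m₀ := interior_subset hu
    have : u⁻¹ ∈ (S ^ m₀)⁻¹ := Set.inv_mem_inv.2 hu'
    rwa [← inv_pow, hsymm] at this
  have hwS : w ∈ S ^ m₀ := interior_subset hw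
  have : x = (g : G) * (u⁻¹ * w) := by
    rw [← hxw]; simp [smul_eq_mul, mul_assoc]
  rw [this, pow_add, pow_add]
  exact Set.mul_mem_mul hg (Set.mul_mem_mul huinv hwS)

/-- A discrete subgroup meets every compact set in a finite set. -/
theorem my_discrete_inter_compact_finite [IsTopologicalGroup G]
    (Λ : Subgroup G) [DiscreteTopology Λ] {C : Set G} (hC : IsCompact C) :
    ((Λ : Set G) ∩ C).Finite := by
  haveI : DiscreteTopology ((Λ : Set G) : Type _) := by
    exact inferInstanceAs (DiscreteTopology Λ)
  obtain ⟨W, hW, hWΛ⟩ := nhds_inter_eq_singleton_of_mem_discrete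
    (x := (1 : G)) (s := (Λ : Set G)) ⟨this⟩ Λ.one_mem
  obtain ⟨V, hV, hVW⟩ := exists_nhds_split_inv hW
  set V' : Set G := interior V with hV'
  have hV'open : IsOpen V' := isOpen_interior
  have h1V' : (1 : G) ∈ V' := mem_interior_iff_mem_nhds.2 hV
  have hcov : C ⊆ ⋃ x : C, (fun y => y * (x : G)) '' V' := by
    intro x hx
    refine Set.mem_iUnion.2 ⟨⟨x, hx⟩, ?_⟩
    exact ⟨1, h1V', by simp⟩
  obtain ⟨t, ht⟩ := hC.elim_finite_subcover (fun x : C => (fun y => y * (x : G)) '' V')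
    (fun x => (Homeomorph.mulRight (x : G)).isOpenMap _ hV'open) hcov
  have hsub : (Λ : Set G) ∩ C ⊆ ⋃ x ∈ t, ((Λ : Set G) ∩ ((fun y => y * (x : G)) '' V')) := by
    intro y hy
    obtain ⟨x, hxt, hyx⟩ := Set.mem_iUnion₂.1 (ht hy.2)
    exact Set.mem_iUnion₂.2 ⟨x, hxt, hy.1, hyx⟩
  refine Set.Finite.subset (Set.Finite.biUnion t.finite_toSet fun x _ => ?_) hsub
  -- each translate contains at most one point of Λ
  have : ((Λ : Set G) ∩ ((fun y => y * (x : G)) '' V')).Subsingleton := by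
    rintro y₁ ⟨hy₁Λ, v₁, hv₁, rfl⟩ y₂ ⟨hy₂Λ, v₂, hv₂, rfl⟩
    have hdiv : (v₁ * (x : G)) / (v₂ * (x : G)) = v₁ / v₂ := by
      simp [div_eq_mul_inv, mul_assoc]
    have hmemW : v₁ / v₂ ∈ W := hVW v₁ (interior_subset hv₁) v₂ (interior_subset hv₂)
    have hmemΛ : (v₁ * (x : G)) / (v₂ * (x : G)) ∈ (Λ : Set G) :=
      Subgroup.div_mem _ hy₁Λ hy₂Λ
    have : (v₁ * (x : G)) / (v₂ * (x : G)) ∈ W ∩ (Λ : Set G) := ⟨by rwa [hdiv], hmemΛ⟩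
    rw [hWΛ] at this
    have hv12 : v₁ = v₂ := by
      have := Set.mem_singleton_iff.1 this
      rw [div_eq_one] at this
      exact mul_right_cancel this
    rw [hv12]
  exact this.finite

end Infra2
section Infra3

open Set Pointwise

/-- Word length bounds. -/
theorem wordLength_le {G : Type*} [Group G] {S : Set G} {g : G} {m : ℕ}
    (h : g ∈ S ^ m) : wordLength S g ≤ m :=
  Nat.sInf_le h

theorem mem_pow_wordLength {G : Type*} [Group G] {S : Set G} {g : G}
    (h : ∃ m : ℕ, g ∈ S ^ m) : g ∈ S ^ wordLength S g :=
  Nat.sInf_mem h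

theorem image_pow_subset {G H : Type*} [Group G] [Group H] (f : G →* H) (S : Set G) :
    ∀ m : ℕ, f '' (S ^ m) ⊆ (f '' S) ^ m
  | 0 => by
    rw [pow_zero, pow_zero]
    rintro x ⟨y, hy, rfl⟩
    rw [show (1 : Set G) = {1} from rfl] at hy
    simp [Set.mem_singleton_iff.1 hy, show (1 : Set H) = {1} from rfl]
  | (m + 1) => by
    rw [pow_succ, pow_succ]
    rintro x ⟨y, hy, rfl⟩
    obtain ⟨a, ha, b, hb, rfl⟩ := hy
    rw [show (fun x1 x2 : G => x1 * x2) a b = a * b from rfl, _root_.map_mul]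
    exact Set.mul_mem_mul (image_pow_subset f S m (Set.mem_image_of_mem f ha))
      (Set.mem_image_of_mem f hb)

theorem list_prod_mem_pow {G : Type*} [Group G] {S : Set G} (hS : (1 : G) ∈ S) {k : ℕ} :
    ∀ (l : List G), (∀ x ∈ l, x ∈ S ^ k) → l.prod ∈ S ^ (k * l.length)
  | [], _ => by
    simp only [List.prod_nil, List.length_nil, Nat.mul_zero, pow_zero]
    exact Set.mem_one.2 rfl
  | (x :: l), h => by
    have h1 : x ∈ S ^ k := h x (List.mem_cons_self)
    have h2 : l.prod ∈ S ^ (k * l.length) :=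
      list_prod_mem_pow hS l (fun y hy => h y (List.mem_cons_of_mem x hy))
    rw [List.prod_cons, List.length_cons, Nat.mul_succ, Nat.add_comm, pow_add]
    exact Set.mul_mem_mul h1 h2

/-- `GL (Fin n) ℝ` is locally compact. -/
theorem glLocallyCompact (n : ℕ) : LocallyCompactSpace (GL (Fin n) ℝ) := by
  haveI : LocallyCompactSpace (Matrix (Fin n) (Fin n) ℝ) :=
    inferInstanceAs (LocallyCompactSpace (Fin n → Fin n → ℝ))
  have hrange : Set.range (Units.embedProduct (Matrix (Fin n) (Fin n) ℝ)) =
      {p : Matrix (Fin n) (Fin n) ℝ × (Matrix (Fin n) (Fin n) ℝ)ᵐᵒᵖ | p.1 * p.2.unop = 1 ∧ p.2.unop * p.1 = 1} := by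
    ext p
    constructor
    · rintro ⟨u, rfl⟩
      exact ⟨u.mul_inv, u.inv_mul⟩
    · rintro ⟨h1, h2⟩
      exact ⟨⟨p.1, p.2.unop, h1, h2⟩, rfl⟩
  have hclosed : IsClosed (Set.range (Units.embedProduct (Matrix (Fin n) (Fin n) ℝ))) := by
    rw [hrange]
    have h1 : IsClosed {p : Matrix (Fin n) (Fin n) ℝ × (Matrix (Fin n) (Fin n) ℝ)ᵐᵒᵖ | p.1 * p.2.unop = 1} :=
      isClosed_eq (continuous_fst.mul (MulOpposite.continuous_unop.comp continuous_snd))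
        continuous_const
    have h2 : IsClosed {p : Matrix (Fin n) (Fin n) ℝ × (Matrix (Fin n) (Fin n) ℝ)ᵐᵒᵖ | p.2.unop * p.1 = 1} :=
      isClosed_eq ((MulOpposite.continuous_unop.comp continuous_snd).mul continuous_fst)
        continuous_const
    exact h1.inter h2
  have hemb : Topology.IsClosedEmbedding (Units.embedProduct (Matrix (Fin n) (Fin n) ℝ)) :=
    ⟨Units.isEmbedding_embedProduct, hclosed⟩
  haveI : LocallyCompactSpace ((Matrix (Fin n) (Fin n) ℝ)ᵐᵒᵖ) :=
    (MulOpposite.opHomeomorph :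
      Matrix (Fin n) (Fin n) ℝ ≃ₜ (Matrix (Fin n) (Fin n) ℝ)ᵐᵒᵖ).locallyCompactSpace_iff.1
      inferInstance
  exact hemb.locallyCompactSpace

end Infra3
section Canon

open SemidirectProduct

theorem continuous_mulVec_pair (n : ℕ) :
    Continuous (fun p : Matrix (Fin n) (Fin n) ℝ × (Fin n → ℝ) => p.1.mulVec p.2) :=
  Continuous.matrix_mulVec continuous_fst continuous_snd

variable {n : ℕ} {Γ : Type*} [Group Γ] (ρ : Γ →* GL (Fin n) ℝ)

theorem glAut_apply (A : GL (Fin n) ℝ) (v : Multiplicative (Fin n → ℝ)) :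
    glAut A v = Multiplicative.ofAdd
      ((A : Matrix (Fin n) (Fin n) ℝ).mulVec (Multiplicative.toAdd v)) := rfl

/-- The canonical homomorphism `ℝ^n ⋊ Γ → ℝ^n ⋊ H`. -/
def canonMap : (Multiplicative (Fin n → ℝ) ⋊[glHom.comp ρ] Γ) →*
    (Multiplicative (Fin n → ℝ) ⋊[glHom.comp ρ.range.topologicalClosure.subtype]
      ρ.range.topologicalClosure) where
  toFun g := ⟨g.left, ⟨ρ g.right, Subgroup.le_topologicalClosure _ ⟨g.right, rfl⟩⟩⟩
  map_one' := by
    refine SemidirectProduct.ext rfl (Subtype.ext ?_)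
    simp
  map_mul' a b := by
    refine SemidirectProduct.ext rfl (Subtype.ext ?_)
    simp

@[simp] theorem canonMap_left (g : Multiplicative (Fin n → ℝ) ⋊[glHom.comp ρ] Γ) :
    (canonMap ρ g).left = g.left := rfl

@[simp] theorem canonMap_right (g : Multiplicative (Fin n → ℝ) ⋊[glHom.comp ρ] Γ) :
    ((canonMap ρ g).right : GL (Fin n) ℝ) = ρ g.right := rfl

theorem canonMap_inl (v : Multiplicative (Fin n → ℝ)) :
    canonMap ρ (inl v) = inl v := by
  refine SemidirectProduct.ext rfl (Subtype.ext ?_)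
  simp [canonMap]

theorem canonMap_inr (γ : Γ) :
    canonMap ρ (inr γ) =
      inr ⟨ρ γ, Subgroup.le_topologicalClosure _ ⟨γ, rfl⟩⟩ := by
  ext <;> rfl

/-- Continuity of the `H`-action on `ℝ^n`. -/
theorem continuous_H_action :
    Continuous (fun p : ρ.range.topologicalClosure × Multiplicative (Fin n → ℝ) =>
      (glHom.comp ρ.range.topologicalClosure.subtype) p.1 p.2) := by
  have h : Continuous (fun p : ρ.range.topologicalClosure × Multiplicative (Fin n → ℝ) =>
      ((p.1 : GL (Fin n) ℝ) : Matrix (Fin n) (Fin n) ℝ).mulVec (Multiplicative.toAdd p.2)) := by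
    refine Continuous.matrix_mulVec ?_ (continuous_toAdd.comp continuous_snd)
    exact (Units.continuous_val.comp continuous_subtype_val).comp continuous_fst
  exact continuous_ofAdd.comp h

/-- Continuity of the `Γ`-action on `ℝ^n`, for `Γ` discrete. -/
theorem continuous_Γ_action [TopologicalSpace Γ] [DiscreteTopology Γ] :
    Continuous (fun p : Γ × Multiplicative (Fin n → ℝ) => (glHom.comp ρ) p.1 p.2) := by
  rw [continuous_iff_continuousAt]
  rintro ⟨γ, v⟩
  have hfix : Continuous (fun w : Multiplicative (Fin n → ℝ) => (glHom.comp ρ) γ w) := by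
    have h : Continuous (fun w : Multiplicative (Fin n → ℝ) =>
        ((ρ γ : GL (Fin n) ℝ) : Matrix (Fin n) (Fin n) ℝ).mulVec (Multiplicative.toAdd w)) :=
      Continuous.matrix_mulVec continuous_const continuous_toAdd
    exact continuous_ofAdd.comp h
  unfold ContinuousAt
  have : (nhds (γ, v)) = Filter.map (Prod.mk γ) (nhds v) := by
    rw [nhds_prod_eq, nhds_discrete, Filter.pure_prod]
  rw [this, Filter.tendsto_map'_iff]
  exact hfix.continuousAt

/-- Continuity of the canonical homomorphism. -/
theorem continuous_canonMap [TopologicalSpace Γ] [DiscreteTopology Γ] :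
    Continuous (canonMap ρ) := by
  apply sdp_continuous_mk
  · exact sdp_continuous_left
  · show Continuous ((fun γ : Γ =>
        ((⟨ρ γ, Subgroup.le_topologicalClosure _ ⟨γ, rfl⟩⟩ : ρ.range.topologicalClosure))) ∘
        SemidirectProduct.right)
    exact continuous_of_discreteTopology.comp sdp_continuous_right

end Canon
set_option maxHeartbeats 1600000 in
theorem statement8 (n : ℕ) (hn : 1 ≤ n) (Γ : Type*) [Group Γ] [TopologicalSpace Γ]
    [DiscreteTopology Γ] (hΓ : Group.FG Γ) (ρ : Γ →* GL (Fin n) ℝ)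
    -- `Λ` is a finitely generated subgroup of `Γ` such that `ρ(Λ)` is a cocompact lattice
    -- in the closure `H` of `ρ(Γ)`:
    (Λ : Subgroup Γ) (hΛfg : Λ.FG)
    (hdiscrete : DiscreteTopology (Subgroup.map ρ Λ : Subgroup (GL (Fin n) ℝ)))
    (hcocompact : ∃ K : Set (GL (Fin n) ℝ),
      K ⊆ (ρ.range.topologicalClosure : Subgroup (GL (Fin n) ℝ)) ∧ IsCompact K ∧
      ((Subgroup.map ρ Λ : Subgroup (GL (Fin n) ℝ)) : Set (GL (Fin n) ℝ)) * K =
        ((ρ.range.topologicalClosure : Subgroup (GL (Fin n) ℝ)) : Set (GL (Fin n) ℝ)))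
    -- word lengths on `G₁ = ℝ^n ⋊_ρ Γ` and `G₂ = ℝ^n ⋊ H`:
    (S₁ : Set (Multiplicative (Fin n → ℝ) ⋊[glHom.comp ρ] Γ))
    (hS₁1 : (1 : Multiplicative (Fin n → ℝ) ⋊[glHom.comp ρ] Γ) ∈ S₁)
    (hS₁symm : S₁⁻¹ = S₁) (hS₁compact : IsCompact S₁)
    (hS₁gen : ∀ g : Multiplicative (Fin n → ℝ) ⋊[glHom.comp ρ] Γ, ∃ m : ℕ, g ∈ S₁ ^ m)
    (S₂ : Set (Multiplicative (Fin n → ℝ) ⋊[glHom.comp ρ.range.topologicalClosure.subtype]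
      (ρ.range.topologicalClosure : Subgroup (GL (Fin n) ℝ))))
    (hS₂1 : (1 : Multiplicative (Fin n → ℝ) ⋊[glHom.comp ρ.range.topologicalClosure.subtype]
      (ρ.range.topologicalClosure : Subgroup (GL (Fin n) ℝ))) ∈ S₂)
    (hS₂symm : S₂⁻¹ = S₂) (hS₂compact : IsCompact S₂)
    (hS₂gen : ∀ g : Multiplicative (Fin n → ℝ) ⋊[glHom.comp ρ.range.topologicalClosure.subtype]
      (ρ.range.topologicalClosure : Subgroup (GL (Fin n) ℝ)), ∃ m : ℕ, g ∈ S₂ ^ m) :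
    ∃ C : ℝ, 1 ≤ C ∧ ∀ v : Fin n → ℝ,
      C⁻¹ * (wordLength S₂ (SemidirectProduct.inl (Multiplicative.ofAdd v)) : ℝ) - C ≤
        (wordLength S₁ (SemidirectProduct.inl (Multiplicative.ofAdd v)) : ℝ) ∧
      (wordLength S₁ (SemidirectProduct.inl (Multiplicative.ofAdd v)) : ℝ) ≤
        C * (wordLength S₂ (SemidirectProduct.inl (Multiplicative.ofAdd v)) : ℝ) + C := by
  classical
  obtain ⟨K, hKsub, hKcomp, hKmul⟩ := hcocompact
  -- instances
  haveI : IsTopologicalGroup Γ :=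
    { continuous_mul := continuous_of_discreteTopology
      continuous_inv := continuous_of_discreteTopology }
  haveI : LocallyCompactSpace Γ := by
    constructor
    intro x nn hn
    refine ⟨{x}, ?_, ?_, isCompact_singleton⟩
    · simp [nhds_discrete]
    · simpa using mem_of_mem_nhds hn
  haveI : LocallyCompactSpace (GL (Fin n) ℝ) := glLocallyCompact n
  haveI : LocallyCompactSpace (ρ.range.topologicalClosure :
      Subgroup (GL (Fin n) ℝ)) := by
    have hcl : IsClosed ((ρ.range.topologicalClosure : Subgroup (GL (Fin n) ℝ)) :
        Set (GL (Fin n) ℝ)) := Subgroup.isClosed_topologicalClosure ρ.range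
    exact hcl.locallyCompactSpace
  haveI : LocallyCompactSpace (Multiplicative (Fin n → ℝ)) :=
    inferInstanceAs (LocallyCompactSpace (Fin n → ℝ))
  haveI tg1 : IsTopologicalGroup (Multiplicative (Fin n → ℝ) ⋊[glHom.comp ρ] Γ) :=
    sdp_topologicalGroup (continuous_Γ_action ρ)
  haveI tg2 : IsTopologicalGroup (Multiplicative (Fin n → ℝ)
      ⋊[glHom.comp ρ.range.topologicalClosure.subtype] ρ.range.topologicalClosure) :=
    sdp_topologicalGroup (continuous_H_action ρ)
  haveI lc1 : LocallyCompactSpace (Multiplicative (Fin n → ℝ) ⋊[glHom.comp ρ] Γ) :=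
    (sdpHomeo (φ := glHom.comp ρ)).locallyCompactSpace_iff.2 inferInstance
  haveI lc2 : LocallyCompactSpace (Multiplicative (Fin n → ℝ)
      ⋊[glHom.comp ρ.range.topologicalClosure.subtype] ρ.range.topologicalClosure) :=
    (sdpHomeo (φ := glHom.comp ρ.range.topologicalClosure.subtype)).locallyCompactSpace_iff.2
      inferInstance
  haveI t21 : T2Space (Multiplicative (Fin n → ℝ) ⋊[glHom.comp ρ] Γ) := by
    haveI : T2Space (Multiplicative (Fin n → ℝ)) := inferInstanceAs (T2Space (Fin n → ℝ))
    exact (sdpHomeo (φ := glHom.comp ρ)).isEmbedding.t2Space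
  haveI t22 : T2Space (Multiplicative (Fin n → ℝ)
      ⋊[glHom.comp ρ.range.topologicalClosure.subtype] ρ.range.topologicalClosure) := by
    haveI : T2Space (Multiplicative (Fin n → ℝ)) := inferInstanceAs (T2Space (Fin n → ℝ))
    exact (sdpHomeo
      (φ := glHom.comp ρ.range.topologicalClosure.subtype)).isEmbedding.t2Space
  -- Direction A: |·|₂ ≤ k₂ |·|₁
  have hφS₁ : IsCompact (⇑(canonMap ρ) '' S₁) := hS₁compact.image (continuous_canonMap ρ)
  obtain ⟨k₂, hk₂⟩ := my_absorb hS₂1 hS₂symm hS₂compact hS₂gen hφS₁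
  have hA : ∀ v : Fin n → ℝ,
      wordLength S₂ (SemidirectProduct.inl (Multiplicative.ofAdd v)) ≤
        k₂ * wordLength S₁ (SemidirectProduct.inl (Multiplicative.ofAdd v)) := by
    intro v
    have hm₁ := mem_pow_wordLength (hS₁gen (SemidirectProduct.inl (Multiplicative.ofAdd v)))
    have himg : canonMap ρ (SemidirectProduct.inl (Multiplicative.ofAdd v)) ∈
        (⇑(canonMap ρ) '' S₁) ^
          wordLength S₁ (SemidirectProduct.inl (Multiplicative.ofAdd v)) :=
      image_pow_subset (canonMap ρ) S₁ _ (Set.mem_image_of_mem _ hm₁)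
    rw [canonMap_inl] at himg
    have h2 := Set.pow_subset_pow_left hk₂ himg
    rw [← pow_mul] at h2
    exact wordLength_le h2
  -- The compact pieces in `G₂`
  set KH1 : Set (ρ.range.topologicalClosure : Subgroup (GL (Fin n) ℝ)) :=
    (Subtype.val ⁻¹' K) ∪ {1} with hKH1def
  have hKH1comp : IsCompact KH1 := by
    have hcl : IsClosed ((ρ.range.topologicalClosure : Subgroup (GL (Fin n) ℝ)) :
        Set (GL (Fin n) ℝ)) := Subgroup.isClosed_topologicalClosure ρ.range
    have hce : Topology.IsClosedEmbedding
        (Subtype.val : ↥(ρ.range.topologicalClosure) →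
          GL (Fin n) ℝ) := hcl.isClosedEmbedding_subtypeVal
    exact (hce.isCompact_preimage hKcomp).union isCompact_singleton
  have hinrcont : Continuous (SemidirectProduct.inr :
      ↥(ρ.range.topologicalClosure) →
      Multiplicative (Fin n → ℝ) ⋊[glHom.comp ρ.range.topologicalClosure.subtype]
        ρ.range.topologicalClosure) :=
    sdp_continuous_mk continuous_const continuous_id'
  set Q := (SemidirectProduct.inr '' KH1) * S₂ * (SemidirectProduct.inr '' KH1)⁻¹ with hQdef
  have hQcomp : IsCompact Q :=
    ((hKH1comp.image hinrcont).mul hS₂compact).mul (hKH1comp.image hinrcont).inv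
  set W1 := (SemidirectProduct.left '' Q) ∪ {1} with hW1def
  have hW1comp : IsCompact W1 := (hQcomp.image sdp_continuous_left).union isCompact_singleton
  set CH := SemidirectProduct.right '' Q with hCHdef
  have hCHcomp : IsCompact CH := hQcomp.image sdp_continuous_right
  -- the finite set of lattice elements
  set D : Set (ρ.range.topologicalClosure : Subgroup (GL (Fin n) ℝ)) :=
    {u | u ∈ CH ∧ (u : GL (Fin n) ℝ) ∈ Subgroup.map ρ Λ} with hDdef
  have hDfin : D.Finite := by
    have hval : IsCompact (Subtype.val '' CH) := hCHcomp.image continuous_subtype_val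
    have hfin0 : (((Subgroup.map ρ Λ : Subgroup (GL (Fin n) ℝ)) : Set (GL (Fin n) ℝ)) ∩
        (Subtype.val '' CH)).Finite :=
      my_discrete_inter_compact_finite (Subgroup.map ρ Λ) hval
    have hsub : D ⊆ Subtype.val ⁻¹'
        ((((Subgroup.map ρ Λ : Subgroup (GL (Fin n) ℝ)) : Set (GL (Fin n) ℝ))) ∩
          (Subtype.val '' CH)) := by
      rintro u ⟨huCH, huΛ⟩
      exact ⟨huΛ, Set.mem_image_of_mem _ huCH⟩
    exact (hfin0.preimage (Set.injOn_of_injective Subtype.val_injective)).subset hsub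
  -- the lifting map
  set ℓ : ↥(ρ.range.topologicalClosure) → Γ := fun u =>
    if h : ∃ γ : Γ, γ ∈ Λ ∧ ρ γ = (u : GL (Fin n) ℝ) then h.choose else 1 with hℓdef
  have hℓspec : ∀ u : (ρ.range.topologicalClosure : Subgroup (GL (Fin n) ℝ)),
      (u : GL (Fin n) ℝ) ∈ Subgroup.map ρ Λ → ℓ u ∈ Λ ∧ ρ (ℓ u) = (u : GL (Fin n) ℝ) := by
    intro u hu
    obtain ⟨γ, hγΛ, hγeq⟩ := Subgroup.mem_map.1 hu
    have hex : ∃ γ : Γ, γ ∈ Λ ∧ ρ γ = (u : GL (Fin n) ℝ) := ⟨γ, hγΛ, hγeq⟩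
    rw [hℓdef]
    simp only [dif_pos hex]
    exact ⟨hex.choose_spec.1, hex.choose_spec.2⟩
  set Dγ : Set Γ := (ℓ '' D) ∪ {1} with hDγdef
  have hDγfin : Dγ.Finite := (hDfin.image ℓ).union (Set.finite_singleton 1)
  -- the compact lift sets in `G₁`
  set E : Set (Multiplicative (Fin n → ℝ) ⋊[glHom.comp ρ] Γ) :=
    {g | g.left ∈ W1 ∧ g.right ∈ Dγ} with hEdef
  have hEcomp : IsCompact E := by
    have : E = (sdpHomeo (φ := glHom.comp ρ)) ⁻¹' (W1 ×ˢ Dγ) := rfl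
    rw [this]
    exact (sdpHomeo (φ := glHom.comp ρ)).isCompact_preimage.2
      (hW1comp.prod hDγfin.isCompact)
  set F : Set (Multiplicative (Fin n → ℝ) ⋊[glHom.comp ρ] Γ) :=
    SemidirectProduct.inr '' Dγ with hFdef
  have hFcomp : IsCompact F := (hDγfin.image _).isCompact
  set C₀ := (E ∪ F) ∪ (E ∪ F)⁻¹ with hC₀def
  have hC₀comp : IsCompact C₀ := (hEcomp.union hFcomp).union (hEcomp.union hFcomp).inv
  obtain ⟨k₁, hk₁⟩ := my_absorb hS₁1 hS₁symm hS₁compact hS₁gen hC₀comp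
  -- the key telescoping construction
  have key : ∀ l : List (Multiplicative (Fin n → ℝ)
        ⋊[glHom.comp ρ.range.topologicalClosure.subtype] ρ.range.topologicalClosure),
      (∀ s ∈ l, s ∈ S₂) →
      ∃ (k : (ρ.range.topologicalClosure : Subgroup (GL (Fin n) ℝ)))
        (g : Multiplicative (Fin n → ℝ) ⋊[glHom.comp ρ] Γ),
        k ∈ KH1 ∧ g ∈ E ^ l.length ∧
        (SemidirectProduct.inr g.right :
          Multiplicative (Fin n → ℝ) ⋊[glHom.comp ρ] Γ) ∈ F ^ l.length ∧
        g.right ∈ Λ ∧ canonMap ρ g = SemidirectProduct.inr k * l.prod := by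
    intro l
    induction l with
    | nil =>
      intro _
      refine ⟨1, 1, Or.inr rfl, ?_, ?_, Λ.one_mem, by simp⟩
      · rw [List.length_nil, pow_zero]; exact Set.mem_one.2 rfl
      · rw [List.length_nil, pow_zero]
        have : ((1 : Multiplicative (Fin n → ℝ) ⋊[glHom.comp ρ] Γ)).right = 1 := rfl
        rw [this, _root_.map_one]
        exact Set.mem_one.2 rfl
    | cons s l ih =>
      intro hl
      obtain ⟨k', g', hk', hgE', hgF', hgΛ', hcanon'⟩ :=
        ih (fun x hx => hl x (List.mem_cons_of_mem s hx))
      have hs : s ∈ S₂ := hl s (List.mem_cons_self)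
      set h₀ : (ρ.range.topologicalClosure : Subgroup (GL (Fin n) ℝ)) :=
        s.right * k'⁻¹ with hh₀def
      have hmemset : ((h₀⁻¹ : (ρ.range.topologicalClosure : Subgroup (GL (Fin n) ℝ))) :
          GL (Fin n) ℝ) ∈
          ((Subgroup.map ρ Λ : Subgroup (GL (Fin n) ℝ)) : Set (GL (Fin n) ℝ)) * K := by
        rw [hKmul]; exact (h₀⁻¹).2
      obtain ⟨a, ha, c, hc, hac⟩ := hmemset
      have hac' : a * c = ((h₀⁻¹ : ↥(ρ.range.topologicalClosure)) : GL (Fin n) ℝ) := hac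
      have haH : a ∈ ρ.range.topologicalClosure :=
        ((Subgroup.map_le_range ρ Λ).trans (Subgroup.le_topologicalClosure ρ.range)) ha
      have hcH : c ∈ ρ.range.topologicalClosure := by
        have hceq : c = a⁻¹ * ((h₀⁻¹ :
            (ρ.range.topologicalClosure : Subgroup (GL (Fin n) ℝ))) : GL (Fin n) ℝ) := by
          rw [← hac']; group
        rw [hceq]
        exact mul_mem (inv_mem haH) (h₀⁻¹).2
      set kk : (ρ.range.topologicalClosure : Subgroup (GL (Fin n) ℝ)) := ⟨c, hcH⟩ with hkkdef
      have hkkKH1 : kk ∈ KH1 := Or.inl hc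
      have hkkh₀ : kk * h₀ = (⟨a, haH⟩ :
          (ρ.range.topologicalClosure : Subgroup (GL (Fin n) ℝ)))⁻¹ := by
        apply Subtype.ext
        have h1 : a * c = ((h₀ : GL (Fin n) ℝ))⁻¹ := hac'
        have : (kk * h₀ : (ρ.range.topologicalClosure : Subgroup (GL (Fin n) ℝ))).1 =
            c * (h₀ : GL (Fin n) ℝ) := rfl
        have hc' : c = a⁻¹ * ((h₀ : GL (Fin n) ℝ))⁻¹ := by
          rw [← h1]; group
        rw [this, hc', inv_mul_cancel_right]
        rfl
      set z := (SemidirectProduct.inr kk * s) * (SemidirectProduct.inr k')⁻¹ with hzdef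
      have hzQ : z ∈ Q := by
        rw [hQdef]
        exact Set.mul_mem_mul
          (Set.mul_mem_mul (Set.mem_image_of_mem _ hkkKH1) hs)
          (Set.inv_mem_inv.2 (Set.mem_image_of_mem _ hk'))
      have hzright : z.right = (⟨a, haH⟩ :
          (ρ.range.topologicalClosure : Subgroup (GL (Fin n) ℝ)))⁻¹ := by
        have : z.right = kk * s.right * k'⁻¹ := by
          rw [hzdef]; simp
        rw [this, mul_assoc, ← hh₀def, hkkh₀]
      have hzrightΛ : (z.right : GL (Fin n) ℝ) ∈ Subgroup.map ρ Λ := by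
        rw [hzright]
        exact inv_mem ha
      have hzD : z.right ∈ D := ⟨Set.mem_image_of_mem _ hzQ, hzrightΛ⟩
      obtain ⟨hℓΛ, hℓeq⟩ := hℓspec z.right hzrightΛ
      set gz : Multiplicative (Fin n → ℝ) ⋊[glHom.comp ρ] Γ :=
        ⟨z.left, ℓ z.right⟩ with hgzdef
      have hgzE : gz ∈ E := by
        constructor
        · exact Or.inl (Set.mem_image_of_mem _ hzQ)
        · exact Or.inl (Set.mem_image_of_mem _ hzD)
      have hcanonz : canonMap ρ gz = z := by
        refine SemidirectProduct.ext rfl (Subtype.ext ?_)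
        exact hℓeq
      refine ⟨kk, gz * g', hkkKH1, ?_, ?_, Λ.mul_mem hℓΛ hgΛ', ?_⟩
      · rw [List.length_cons, pow_succ']
        exact Set.mul_mem_mul hgzE hgE'
      · rw [List.length_cons, pow_succ']
        have : (gz * g').right = ℓ z.right * g'.right := rfl
        rw [this, _root_.map_mul]
        exact Set.mul_mem_mul (Set.mem_image_of_mem _ (Or.inl (Set.mem_image_of_mem _ hzD)))
          hgF'
      · rw [_root_.map_mul, hcanonz, hcanon', List.prod_cons, hzdef]
        group
  -- Direction B: |·|₁ ≤ 2 k₁ |·|₂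
  have hB : ∀ v : Fin n → ℝ,
      wordLength S₁ (SemidirectProduct.inl (Multiplicative.ofAdd v)) ≤
        2 * k₁ * wordLength S₂ (SemidirectProduct.inl (Multiplicative.ofAdd v)) := by
    intro v
    set m := wordLength S₂ (SemidirectProduct.inl (Multiplicative.ofAdd v)) with hmdef
    have hm : SemidirectProduct.inl (Multiplicative.ofAdd v) ∈ S₂ ^ m :=
      mem_pow_wordLength (hS₂gen _)
    obtain ⟨f, hfprod⟩ := Set.mem_pow.1 hm
    set l := List.ofFn (fun i => (f i).1) with hldef
    have hlmem : ∀ s ∈ l, s ∈ S₂ := by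
      intro s hsl
      rw [hldef, List.mem_ofFn] at hsl
      obtain ⟨i, rfl⟩ := hsl
      exact (f i).2
    have hllen : l.length = m := by rw [hldef, List.length_ofFn]
    have hlprod : l.prod = SemidirectProduct.inl (Multiplicative.ofAdd v) := hfprod
    obtain ⟨k, g, hk, hgE, hgF, hgΛ, hcanon⟩ := key l hlmem
    rw [hlprod] at hcanon
    -- identify k
    have hkval : ((canonMap ρ g).right) = k := by
      have := congrArg SemidirectProduct.right hcanon
      simpa using this
    -- the corrected element
    set x := (SemidirectProduct.inr g.right :
        Multiplicative (Fin n → ℝ) ⋊[glHom.comp ρ] Γ)⁻¹ * g with hxdef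
    have hxright : x.right = 1 := by
      rw [hxdef]; simp
    have hxinl : x = SemidirectProduct.inl x.left := by
      conv_lhs => rw [← SemidirectProduct.inl_left_mul_inr_right x]
      rw [hxright, _root_.map_one, mul_one]
    have hcanonx : canonMap ρ x = SemidirectProduct.inl (Multiplicative.ofAdd v) := by
      rw [hxdef, _root_.map_mul, _root_.map_inv, canonMap_inr]
      have : (⟨ρ g.right, Subgroup.le_topologicalClosure _ ⟨g.right, rfl⟩⟩ :
          (ρ.range.topologicalClosure : Subgroup (GL (Fin n) ℝ))) = k := by
        apply Subtype.ext
        simpa using congrArg Subtype.val hkval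
      rw [this, hcanon]
      group
    have hxeq : x = SemidirectProduct.inl (Multiplicative.ofAdd v) := by
      have h5 : canonMap ρ (SemidirectProduct.inl x.left) =
          SemidirectProduct.inl (Multiplicative.ofAdd v) := by
        rw [← hxinl]; exact hcanonx
      rw [canonMap_inl] at h5
      have h6 : x.left = Multiplicative.ofAdd v := SemidirectProduct.inl_inj.mp h5
      rw [hxinl, h6]
    -- membership bound
    have hmem2 : x ∈ C₀ ^ (m + m) := by
      rw [pow_add]
      have h1 : (SemidirectProduct.inr g.right :
          Multiplicative (Fin n → ℝ) ⋊[glHom.comp ρ] Γ)⁻¹ ∈ (F ^ m)⁻¹ := by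
        rw [← hllen]
        exact Set.inv_mem_inv.2 hgF
      rw [← inv_pow] at h1
      have h1' : (SemidirectProduct.inr g.right :
          Multiplicative (Fin n → ℝ) ⋊[glHom.comp ρ] Γ)⁻¹ ∈ C₀ ^ m :=
        Set.pow_subset_pow_left (by
          intro y hy
          exact Or.inr (Set.inv_subset_inv.2 Set.subset_union_right hy)) h1
      have h2 : g ∈ C₀ ^ m := by
        rw [← hllen]
        exact Set.pow_subset_pow_left (fun y hy => Or.inl (Or.inl hy)) hgE
      exact Set.mul_mem_mul h1' h2
    have hmem3 : SemidirectProduct.inl (Multiplicative.ofAdd v) ∈ S₁ ^ (k₁ * (m + m)) := by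
      rw [← hxeq, pow_mul]
      exact Set.pow_subset_pow_left hk₁ hmem2
    have := wordLength_le hmem3
    calc wordLength S₁ (SemidirectProduct.inl (Multiplicative.ofAdd v)) ≤ k₁ * (m + m) := this
      _ = 2 * k₁ * m := by ring
  -- final arithmetic
  refine ⟨max (max (2 * (k₁ : ℝ)) (k₂ : ℝ)) 1, le_max_right _ _, ?_⟩
  intro v
  set a := (wordLength S₁ (SemidirectProduct.inl (Multiplicative.ofAdd v)) : ℝ) with hadef
  set b := (wordLength S₂ (SemidirectProduct.inl (Multiplicative.ofAdd v)) : ℝ) with hbdef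
  set C := max (max (2 * (k₁ : ℝ)) (k₂ : ℝ)) 1 with hCdef
  have ha0 : 0 ≤ a := by positivity
  have hb0 : 0 ≤ b := by positivity
  have hC1 : (1 : ℝ) ≤ C := le_max_right _ _
  have hCpos : (0 : ℝ) < C := lt_of_lt_of_le one_pos hC1
  have hab : a ≤ 2 * (k₁ : ℝ) * b := by
    have := hB v
    calc a ≤ ((2 * k₁ * wordLength S₂ (SemidirectProduct.inl (Multiplicative.ofAdd v)) :
        ℕ) : ℝ) := by exact_mod_cast Nat.cast_le.2 this
      _ = 2 * (k₁ : ℝ) * b := by push_cast; ring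
  have hba : b ≤ (k₂ : ℝ) * a := by
    have := hA v
    calc b ≤ ((k₂ * wordLength S₁ (SemidirectProduct.inl (Multiplicative.ofAdd v)) :
        ℕ) : ℝ) := by exact_mod_cast Nat.cast_le.2 this
      _ = (k₂ : ℝ) * a := by push_cast; ring
  constructor
  · have hbCa : b ≤ C * a := by
      calc b ≤ (k₂ : ℝ) * a := hba
        _ ≤ C * a := mul_le_mul_of_nonneg_right ((le_max_right _ _).trans (le_max_left _ _)) ha0
    have hinv : C⁻¹ * b ≤ a := by
      rw [inv_mul_le_iff₀ hCpos]
      exact hbCa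
    linarith
  · have h2k₁C : 2 * (k₁ : ℝ) ≤ C := (le_max_left _ _).trans (le_max_left _ _)
    calc a ≤ 2 * (k₁ : ℝ) * b := hab
      _ ≤ C * b := mul_le_mul_of_nonneg_right h2k₁C hb0
      _ ≤ C * b + C := le_add_of_nonneg_right (le_of_lt hCpos)

end
end

section
/- Let Γ be a group acting by graph automorphisms on a connected, locally finite graph X (so Γ acts by isometries on the vertex set of X with its graph distance d_X), and acting by isometries on a metric space (Y, d_Y). Then the diagonal action of Γ on the product of the vertex set of X and Y is metrically proper (i.e. for every vertex x, every y ∈ Y and every r > 0, the set {g ∈ Γ : d_X(g·x, x) + d_Y(g·y, y) ≤ r} is finite) if and only if there exists a vertex x of X whose stabilizer Γ_x acts metrically properly on Y (i.e. for every y ∈ Y and r > 0, the set {g ∈ Γ_x : d_Y(g·y, y) ≤ r} is finite). -/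
private lemma ball_fin {V : Type*} (G : SimpleGraph V) (hconn : G.Connected)
    (hlf : ∀ v : V, (G.neighborSet v).Finite) (x : V) :
    ∀ n : ℕ, {v : V | G.dist x v ≤ n}.Finite := by
  intro n
  induction n with
  | zero =>
    refine (Set.finite_singleton x).subset fun v hv => ?_
    simp only [Set.mem_setOf_eq, Nat.le_zero] at hv
    have := (hconn.dist_eq_zero_iff).mp hv
    simp [this.symm]
  | succ n ih =>
    refine (ih.union (ih.biUnion fun u _ => hlf u)).subset fun v hv => ?_
    simp only [Set.mem_setOf_eq] at hv
    rcases le_or_gt (G.dist x v) n with h | h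
    · exact Or.inl h
    · have hdist : G.dist x v = n + 1 := le_antisymm hv h
      obtain ⟨p, hp⟩ := hconn.exists_walk_length_eq_dist x v
      obtain ⟨q, hq⟩ : ∃ q : G.Walk v x, q.length = n + 1 :=
        ⟨p.reverse, by simp [hp, hdist]⟩
      cases q with
      | nil => simp at hq
      | @cons _ u _ ha q' =>
        simp only [SimpleGraph.Walk.length_cons, Nat.add_right_cancel_iff] at hq
        refine Or.inr (Set.mem_biUnion (show G.dist x u ≤ n from ?_) ha.symm)
        calc G.dist x u = G.dist u x := SimpleGraph.dist_comm ..
        _ ≤ q'.length := SimpleGraph.dist_le q'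
        _ = n := hq

theorem statement10 (V : Type*) (G : SimpleGraph V) (hconn : G.Connected)
    (hlf : ∀ v : V, (G.neighborSet v).Finite)
    (Γ : Type*) [Group Γ] [MulAction Γ V]
    (hgraph : ∀ (γ : Γ) (u v : V), G.Adj (γ • u) (γ • v) ↔ G.Adj u v)
    (Y : Type*) [MetricSpace Y] [MulAction Γ Y]
    (hiso : ∀ (γ : Γ) (y y' : Y), dist (γ • y) (γ • y') = dist y y') :
    (∀ (x : V) (y : Y) (r : ℝ), 0 < r →
        {g : Γ | (G.dist (g • x) x : ℝ) + dist (g • y) y ≤ r}.Finite) ↔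
    ∃ x : V, ∀ (y : Y) (r : ℝ), 0 < r →
        {g : Γ | g • x = x ∧ dist (g • y) y ≤ r}.Finite := by
  -- distance is invariant under the action
  have hle : ∀ (γ : Γ) (u v : V), G.dist (γ • u) (γ • v) ≤ G.dist u v := by
    intro γ u v
    obtain ⟨p, hp⟩ := hconn.exists_walk_length_eq_dist u v
    let f : G →g G := ⟨fun w => γ • w, fun {a b} hab => (hgraph γ a b).mpr hab⟩
    calc G.dist (γ • u) (γ • v) ≤ (p.map f).length := SimpleGraph.dist_le _
    _ = p.length := SimpleGraph.Walk.length_map f p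
    _ = G.dist u v := hp
  have hdistS : ∀ (γ : Γ) (u v : V), G.dist (γ • u) (γ • v) = G.dist u v := by
    intro γ u v
    refine le_antisymm (hle γ u v) ?_
    have := hle γ⁻¹ (γ • u) (γ • v)
    simpa using this
  constructor
  · intro h
    obtain ⟨x⟩ := hconn.nonempty
    refine ⟨x, fun y r hr => (h x y r hr).subset fun g hg => ?_⟩
    obtain ⟨h1, h2⟩ := hg
    simp [h1, h2, SimpleGraph.dist_self]
  · rintro ⟨x, hx⟩ x' y r hr
    -- key: proper at the base vertex x
    have key : ∀ R : ℝ, {g : Γ | (G.dist (g • x) x : ℝ) + dist (g • y) y ≤ R}.Finite := by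
      intro R
      set n : ℕ := ⌈R⌉₊ with hn
      have hB : {v : V | G.dist x v ≤ n}.Finite := ball_fin G hconn hlf x n
      have hsub : {g : Γ | (G.dist (g • x) x : ℝ) + dist (g • y) y ≤ R} ⊆
          ⋃ v ∈ {v : V | G.dist x v ≤ n},
            {g : Γ | g • x = v ∧ dist (g • y) y ≤ R} := by
        intro g hg
        simp only [Set.mem_setOf_eq] at hg
        have h1 : (G.dist (g • x) x : ℝ) ≤ R :=
          le_trans (le_add_of_nonneg_right dist_nonneg) hg
        have h2 : dist (g • y) y ≤ R := by
          have : (0:ℝ) ≤ (G.dist (g • x) x : ℝ) := Nat.cast_nonneg _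
          linarith
        have hB' : G.dist x (g • x) ≤ n := by
          rw [SimpleGraph.dist_comm]
          exact_mod_cast le_trans h1 (Nat.le_ceil R)
        exact Set.mem_biUnion hB' ⟨rfl, h2⟩
      refine (Set.Finite.biUnion hB fun v _ => ?_).subset hsub
      by_cases hv : ∃ h0 : Γ, h0 • x = v
      · obtain ⟨h0, hh0⟩ := hv
        have hR' : (0:ℝ) < |R| + dist y (h0 • y) + 1 := by positivity
        refine ((hx y _ hR').image (fun k => h0 * k)).subset ?_
        rintro g ⟨hg1, hg2⟩
        refine ⟨h0⁻¹ * g, ⟨?_, ?_⟩, by group⟩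
        · have : g • x = h0 • x := hg1.trans hh0.symm
          rw [mul_smul, this, inv_smul_smul]
        · have e1 : dist ((h0⁻¹ * g) • y) y = dist (g • y) (h0 • y) := by
            rw [mul_smul]
            have := hiso h0 (h0⁻¹ • g • y) (h0⁻¹ • h0 • y)
            simpa using this.symm
          calc dist ((h0⁻¹ * g) • y) y = dist (g • y) (h0 • y) := e1
          _ ≤ dist (g • y) y + dist y (h0 • y) := dist_triangle _ _ _
          _ ≤ |R| + dist y (h0 • y) + 1 := by
              have := le_abs_self R; linarith
      · refine Set.Finite.subset (Set.finite_empty) fun g hg => ?_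
        exact absurd ⟨g, hg.1⟩ hv
    -- transfer from x to x'
    refine (key (r + 2 * G.dist x x')).subset fun g hg => ?_
    simp only [Set.mem_setOf_eq] at hg ⊢
    have htri : G.dist (g • x) x ≤ G.dist x x' + G.dist (g • x') x' + G.dist x' x := by
      calc G.dist (g • x) x ≤ G.dist (g • x) (g • x') + G.dist (g • x') x :=
        hconn.dist_triangle
      _ ≤ G.dist (g • x) (g • x') + (G.dist (g • x') x' + G.dist x' x) :=
        Nat.add_le_add_left hconn.dist_triangle _
      _ = G.dist x x' + G.dist (g • x') x' + G.dist x' x := by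
        rw [hdistS g x x']; ring
    have hcx : (G.dist (g • x) x : ℝ) ≤ G.dist x x' + G.dist (g • x') x' + G.dist x' x := by
      exact_mod_cast htri
    have hcc : (G.dist x' x : ℝ) = G.dist x x' := by
      exact_mod_cast congrArg Nat.cast (SimpleGraph.dist_comm ..)
    linarith
end

section
/- Let n ≥ 1 and let A ∈ GL_n(ℝ). Then the cyclic subgroup {A^k : k ∈ ℤ} of GL_n(ℝ) is either relatively compact (its closure in GL_n(ℝ) is compact) or closed and discrete in GL_n(ℝ). -/
/-!
Statement 11: for `A ∈ GL_n(ℝ)`, the cyclic subgroup `{A^k : k ∈ ℤ}` is either relatively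
compact in `GL_n(ℝ)`, or closed and discrete in `GL_n(ℝ)`.
-/

open Matrix

namespace St11

open Filter Topology Set

variable {n : ℕ}

abbrev Mn (n : ℕ) := Matrix (Fin n) (Fin n) ℝ

def e (g : GL (Fin n) ℝ) : Mn n × Mn n := ((g : Mn n), ((g⁻¹ : GL (Fin n) ℝ) : Mn n))

lemma isEmbedding_e : IsEmbedding (e (n := n)) := by
  have h1 : (e (n := n)) = (Homeomorph.prodCongr (Homeomorph.refl _) MulOpposite.opHomeomorph.symm) ∘ (Units.embedProduct _) := rfl
  rw [h1]
  exact (Homeomorph.prodCongr (Homeomorph.refl _) MulOpposite.opHomeomorph.symm).isEmbedding.comp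
    Units.isEmbedding_embedProduct

lemma range_e : Set.range (e (n := n)) = {p : Mn n × Mn n | p.1 * p.2 = 1 ∧ p.2 * p.1 = 1} := by
  ext p
  constructor
  · rintro ⟨g, rfl⟩
    constructor
    · exact_mod_cast Units.mul_inv g
    · exact_mod_cast Units.inv_mul g
  · rintro ⟨h1, h2⟩
    exact ⟨⟨p.1, p.2, h1, h2⟩, rfl⟩

lemma isClosed_range_e : IsClosed (Set.range (e (n := n))) := by
  rw [range_e]
  exact ((isClosed_eq (continuous_fst.mul continuous_snd) continuous_const).inter
    (isClosed_eq (continuous_snd.mul continuous_fst) continuous_const))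

lemma isClosedEmbedding_e : IsClosedEmbedding (e (n := n)) :=
  ⟨isEmbedding_e, isClosed_range_e⟩

instance : LocallyCompactSpace (Mn n) := by show LocallyCompactSpace (Matrix _ _ _); unfold Matrix; exact inferInstanceAs (LocallyCompactSpace (Fin n → Fin n → ℝ))

instance : LocallyCompactSpace (GL (Fin n) ℝ) :=
  isClosedEmbedding_e.locallyCompactSpace

lemma continuous_e : Continuous (e (n := n)) := isEmbedding_e.continuous


instance : FirstCountableTopology (Mn n) := by
  show FirstCountableTopology (Matrix _ _ _); unfold Matrix; exact inferInstanceAs (FirstCountableTopology (Fin n → Fin n → ℝ))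

lemma cont_mulVec_entry (v : Fin n → ℂ) (c : Fin n) :
    Continuous fun X : Matrix (Fin n) (Fin n) ℂ => X.mulVec v c := by
  simp only [Matrix.mulVec, dotProduct]
  exact continuous_finset_sum _ fun j _ =>
    ((continuous_id.matrix_elem c j).mul continuous_const)

lemma pow_mulVec_eig (B : Matrix (Fin n) (Fin n) ℂ) (μ : ℂ) (v : Fin n → ℂ)
    (he : B.mulVec v = μ • v) (k : ℕ) : (B ^ k).mulVec v = μ ^ k • v := by
  induction k with
  | zero => simp [Matrix.one_mulVec]
  | succ k ih =>
      rw [pow_succ', ← Matrix.mulVec_mulVec, ih, Matrix.mulVec_smul, he, smul_smul, ← pow_succ]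

lemma eig_mod_one {B : Matrix (Fin n) (Fin n) ℂ} {m : ℕ → ℕ}
    (hm : Tendsto m atTop atTop) (hB : Tendsto (fun i => B ^ m i) atTop (𝓝 1))
    {μ : ℂ} {v : Fin n → ℂ} (hv : v ≠ 0) (he : B.mulVec v = μ • v) :
    ‖μ‖ = 1 := by
  obtain ⟨c, hc⟩ : ∃ c, v c ≠ 0 := Function.ne_iff.mp hv
  have h1 : Tendsto (fun i => ((B ^ m i).mulVec v) c) atTop (𝓝 ((1 : Matrix (Fin n) (Fin n) ℂ).mulVec v c)) :=
    ((cont_mulVec_entry v c).tendsto _).comp hB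
  have h2 : Tendsto (fun i => μ ^ m i * v c) atTop (𝓝 (v c)) := by
    simpa [pow_mulVec_eig B μ v he, Matrix.one_mulVec] using h1
  have h3 : Tendsto (fun i => μ ^ m i) atTop (𝓝 1) := by
    have := h2.div_const (v c)
    simpa [mul_div_cancel_right₀ _ hc, div_self hc] using this
  have h4 : Tendsto (fun i => ‖μ‖ ^ m i) atTop (𝓝 1) := by
    have := (continuous_norm.tendsto (1 : ℂ)).comp h3
    simpa [Function.comp_def, norm_pow] using this
  rcases lt_trichotomy ‖μ‖ 1 with h | h | h
  · exfalso
    have := (tendsto_pow_atTop_nhds_zero_of_lt_one (norm_nonneg μ) h).comp hm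
    exact zero_ne_one (tendsto_nhds_unique this h4)
  · exact h
  · exfalso
    have := (tendsto_pow_atTop_atTop_of_one_lt h).comp hm
    exact not_tendsto_nhds_of_tendsto_atTop this 1 h4

lemma no_gen {B : Matrix (Fin n) (Fin n) ℂ} {m : ℕ → ℕ}
    (hm : Tendsto m atTop atTop) (hB : Tendsto (fun i => B ^ m i) atTop (𝓝 1))
    {μ : ℂ} {v w : Fin n → ℂ} (hw : w ≠ 0)
    (hew : B.mulVec w = μ • w) (hev : B.mulVec v = μ • v + w) : False := by
  have hμ : ‖μ‖ = 1 := eig_mod_one hm hB hw hew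
  have hμ0 : μ ≠ 0 := by
    intro h; rw [h] at hμ; simp at hμ
  have hpow : ∀ k : ℕ, (B ^ k).mulVec v = μ ^ k • v + ((k : ℂ) * μ ^ k / μ) • w := by
    intro k
    induction k with
    | zero => simp [Matrix.one_mulVec]
    | succ k ih =>
        rw [pow_succ', ← Matrix.mulVec_mulVec, ih, Matrix.mulVec_add, Matrix.mulVec_smul,
          Matrix.mulVec_smul, hev, hew]
        funext x
        simp only [Pi.add_apply, Pi.smul_apply, smul_eq_mul, Matrix.mulVec_add,
          Matrix.mulVec_smul]
        push_cast
        field_simp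
        ring
  obtain ⟨c, hc⟩ : ∃ c, w c ≠ 0 := Function.ne_iff.mp hw
  set s : ℕ → ℂ := fun i => ((B ^ m i).mulVec v) c with hs
  have h1 : Tendsto s atTop (𝓝 ((1 : Matrix (Fin n) (Fin n) ℂ).mulVec v c)) :=
    ((cont_mulVec_entry v c).tendsto _).comp hB
  have h1' : Tendsto (fun i => ‖s i‖) atTop (𝓝 ‖(1 : Matrix (Fin n) (Fin n) ℂ).mulVec v c‖) :=
    h1.norm
  have hub : ∀ᶠ i in atTop, ‖s i‖ < ‖(1 : Matrix (Fin n) (Fin n) ℂ).mulVec v c‖ + 1 :=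
    h1'.eventually_lt_const (lt_add_one _)
  have hlb : ∀ i, (m i : ℝ) * ‖w c‖ - ‖v c‖ ≤ ‖s i‖ := by
    intro i
    have : s i = μ ^ m i * v c + ((m i : ℂ) * μ ^ m i / μ) * w c := by
      rw [hs]; simp [hpow (m i), Pi.smul_apply, smul_eq_mul]
    rw [this]
    have habs : ‖((m i : ℂ) * μ ^ m i / μ) * w c‖ = (m i : ℝ) * ‖w c‖ := by
      simp [norm_mul, norm_div, norm_pow, hμ]
    calc (m i : ℝ) * ‖w c‖ - ‖v c‖
        ≤ ‖((m i : ℂ) * μ ^ m i / μ) * w c‖ - ‖μ ^ m i * v c‖ := by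
          rw [habs]; gcongr; simp [norm_mul, norm_pow, hμ]
      _ ≤ ‖μ ^ m i * v c + ((m i : ℂ) * μ ^ m i / μ) * w c‖ := by
          have h9 := norm_sub_le (μ ^ m i * v c + ((m i : ℂ) * μ ^ m i / μ) * w c) (μ ^ m i * v c)
          simp only [add_sub_cancel_left] at h9
          linarith
  have hwc : (0:ℝ) < ‖w c‖ := norm_pos_iff.mpr hc
  have hdiv : Tendsto (fun i => (m i : ℝ) * ‖w c‖ - ‖v c‖) atTop atTop := by
    apply Filter.tendsto_atTop_add_const_right
    exact (tendsto_natCast_atTop_atTop.comp hm).atTop_mul_const hwc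
  have : ∀ᶠ i in atTop, ‖(1 : Matrix (Fin n) (Fin n) ℂ).mulVec v c‖ + 1 < ‖s i‖ := by
    filter_upwards [hdiv.eventually_gt_atTop (‖(1 : Matrix (Fin n) (Fin n) ℂ).mulVec v c‖ + 1)] with i hi
    exact hi.trans_le (hlb i)
  obtain ⟨i, hi1, hi2⟩ := (hub.and this).exists
  exact absurd (hi1.trans hi2) (lt_irrefl _)


lemma diag_bound {B : Matrix (Fin n) (Fin n) ℂ} {m : ℕ → ℕ}
    (hm : Tendsto m atTop atTop) (hB : Tendsto (fun i => B ^ m i) atTop (𝓝 1)) :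
    ∃ C : ℝ, ∀ (k : ℕ) (i j : Fin n), ‖(B ^ k) i j‖ ≤ C := by
  classical
  set f : Module.End ℂ (Fin n → ℂ) := B.mulVecLin with hf
  set g : ℂ → Module.End ℂ (Fin n → ℂ) := fun μ => f - μ • (1 : Module.End ℂ (Fin n → ℂ)) with hg
  -- step 2 reformulated
  have key : ∀ (μ : ℂ) (v : Fin n → ℂ), ((g μ ^ 2) v = 0) → (g μ) v = 0 := by
    intro μ v h2
    by_contra hne
    set w := (g μ) v with hwdef
    have hew : B.mulVec w = μ • w := by
      have h0 : (g μ) w = 0 := by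
        have h5 : (g μ ^ 2) v = (g μ) ((g μ) v) := by
          rw [pow_two, Module.End.mul_apply]
        rw [h5] at h2
        exact h2
      have := sub_eq_zero.mp (by simpa [hg, LinearMap.sub_apply, LinearMap.smul_apply,
        Module.End.one_apply] using h0)
      simpa [hf, Matrix.mulVecLin_apply] using this
    have hev : B.mulVec v = μ • v + w := by
      have : f v - μ • v = w := by
        simp [hwdef, hg, LinearMap.sub_apply, LinearMap.smul_apply, Module.End.one_apply]
      have h3 : f v = μ • v + w := by rw [← this]; abel
      simpa [hf, Matrix.mulVecLin_apply] using h3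
    exact no_gen hm hB hne hew hev
  have gen_eq : ∀ (μ : ℂ) (k : ℕ) (v : Fin n → ℂ), ((g μ ^ k) v = 0) → (g μ) v = 0 := by
    intro μ k
    induction k with
    | zero => intro v hv; simp only [pow_zero, Module.End.one_apply] at hv; simp [hv]
    | succ k ih =>
        intro v hv
        have h1 : (g μ ^ k) ((g μ) v) = 0 := by
          rw [← Module.End.mul_apply, ← pow_succ]
          exact hv
        have h2 := ih _ h1
        refine key μ v ?_
        rw [pow_two, Module.End.mul_apply]
        exact h2
  -- the set of eigenvectors spans
  set E : Set (Fin n → ℂ) := {v | v ≠ 0 ∧ ∃ μ : ℂ, B.mulVec v = μ • v} with hE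
  have hspanE : Submodule.span ℂ E = ⊤ := by
    rw [eq_top_iff, ← Module.End.iSup_maxGenEigenspace_eq_top f]
    apply iSup_le
    intro μ v hv
    obtain ⟨k, hk⟩ := (Module.End.mem_maxGenEigenspace f μ v).mp hv
    have heig : (g μ) v = 0 := gen_eq μ k v (by
      have h6 : g μ = f - μ • (1 : Module.End ℂ (Fin n → ℂ)) := hg ▸ rfl
      rw [h6]
      exact hk)
    by_cases h0 : v = 0
    · simp [h0]
    · apply Submodule.subset_span
      refine ⟨h0, μ, ?_⟩
      have := sub_eq_zero.mp (by simpa [hg, LinearMap.sub_apply, LinearMap.smul_apply,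
        Module.End.one_apply] using heig)
      simpa [hf, Matrix.mulVecLin_apply] using this
  obtain ⟨s, hsE, hspan, hli⟩ := exists_linearIndependent ℂ E
  have hstop : Submodule.span ℂ s = ⊤ := by rw [hspan, hspanE]
  haveI : Fintype s := (hli.setFinite).fintype
  let b : Module.Basis s ℂ (Fin n → ℂ) := Module.Basis.mk hli (by rw [Subtype.range_coe, hstop])
  have hcard : Fintype.card s = n := by
    have h1 := Module.finrank_eq_card_basis b
    simp only [Module.finrank_fin_fun] at h1
    omega
  let b' : Module.Basis (Fin n) ℂ (Fin n → ℂ) := b.reindex (Fintype.equivFinOfCardEq hcard)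
  have hb'E : ∀ j, b' j ∈ E := by
    intro j
    have : b' j = b ((Fintype.equivFinOfCardEq hcard).symm j) := Module.Basis.reindex_apply b _ j
    rw [this]
    have : b ((Fintype.equivFinOfCardEq hcard).symm j) =
        ((Fintype.equivFinOfCardEq hcard).symm j : Fin n → ℂ) := by
      simp [b, Module.Basis.mk_apply]
    rw [this]
    exact hsE ((Fintype.equivFinOfCardEq hcard).symm j).2
  choose μ hμ using fun j => (hb'E j).2
  have hb'ne : ∀ j, b' j ≠ 0 := fun j => (hb'E j).1
  have hmod : ∀ j, ‖μ j‖ = 1 := fun j => eig_mod_one hm hB (hb'ne j) (hμ j)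
  set P : Matrix (Fin n) (Fin n) ℂ := (Pi.basisFun ℂ (Fin n)).toMatrix ⇑b' with hPdef
  have hP : ∀ i j, P i j = b' j i := by
    intro i j
    simp [hPdef, Module.Basis.toMatrix_apply]
  letI : Invertible P := (Pi.basisFun ℂ (Fin n)).invertibleToMatrix b'
  set Q : Matrix (Fin n) (Fin n) ℂ := ⅟P with hQdef
  have hBP : B * P = P * diagonal μ := by
    ext i j
    have h1 : (B * P) i j = (B.mulVec (b' j)) i := by
      simp [Matrix.mul_apply, Matrix.mulVec, dotProduct, hP]
    rw [h1, hμ j]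
    simp [Matrix.mul_diagonal, hP, mul_comm]
  have hBk : ∀ k : ℕ, B ^ k = P * (diagonal fun l => μ l ^ k) * Q := by
    intro k
    induction k with
    | zero =>
        simp only [pow_zero]
        rw [show (Matrix.diagonal fun _ : Fin n => (1:ℂ)) = 1 from Matrix.diagonal_one,
          Matrix.mul_one, hQdef, mul_invOf_self]
    | succ k ih =>
        have hdd : diagonal μ * (diagonal fun l => μ l ^ k) = diagonal fun l => μ l ^ (k + 1) := by
          simp [Matrix.diagonal_mul_diagonal, pow_succ']
        rw [pow_succ', ih, ← Matrix.mul_assoc, ← Matrix.mul_assoc, hBP,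
          Matrix.mul_assoc P (diagonal μ), hdd]
  set CP : ℝ := ∑ i, ∑ j, ‖P i j‖ with hCP
  set CQ : ℝ := ∑ i, ∑ j, ‖Q i j‖ with hCQ
  have hPb : ∀ i j, ‖P i j‖ ≤ CP := by
    intro i j
    rw [hCP]
    calc ‖P i j‖ ≤ ∑ j', ‖P i j'‖ := Finset.single_le_sum (fun _ _ => norm_nonneg _) (Finset.mem_univ j)
      _ ≤ ∑ i', ∑ j', ‖P i' j'‖ := Finset.single_le_sum
          (fun i' _ => Finset.sum_nonneg fun _ _ => norm_nonneg _) (Finset.mem_univ i)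
  have hQb : ∀ i j, ‖Q i j‖ ≤ CQ := by
    intro i j
    rw [hCQ]
    calc ‖Q i j‖ ≤ ∑ j', ‖Q i j'‖ := Finset.single_le_sum (fun _ _ => norm_nonneg _) (Finset.mem_univ j)
      _ ≤ ∑ i', ∑ j', ‖Q i' j'‖ := Finset.single_le_sum
          (fun i' _ => Finset.sum_nonneg fun _ _ => norm_nonneg _) (Finset.mem_univ i)
  have hCPnn : 0 ≤ CP := Finset.sum_nonneg fun _ _ => Finset.sum_nonneg fun _ _ => norm_nonneg _
  refine ⟨n * (CP * CQ), ?_⟩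
  intro k i j
  rw [hBk k]
  have hentry : (P * (diagonal fun l => μ l ^ k) * Q) i j = ∑ l, (P i l * μ l ^ k) * Q l j := by
    rw [Matrix.mul_apply]
    congr 1
    funext l
    rw [Matrix.mul_diagonal]
  rw [hentry]
  calc ‖∑ l, (P i l * μ l ^ k) * Q l j‖ ≤ ∑ l, ‖(P i l * μ l ^ k) * Q l j‖ :=
        norm_sum_le _ _
    _ ≤ ∑ _l : Fin n, CP * CQ := by
        apply Finset.sum_le_sum
        intro l _
        rw [norm_mul, norm_mul, norm_pow, hmod l, one_pow, mul_one]
        exact mul_le_mul (hPb i l) (hQb l j) (norm_nonneg _) hCPnn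
    _ = n * (CP * CQ) := by simp [mul_comm]


instance : T2Space (Mn n) := by show T2Space (Matrix _ _ _); unfold Matrix; exact inferInstanceAs (T2Space (Fin n → Fin n → ℝ))

lemma real_bound {B : Mn n} {m : ℕ → ℕ}
    (hm : Tendsto m atTop atTop)
    (h1 : Tendsto (fun i => B ^ m i) atTop (𝓝 1)) :
    ∃ C : ℝ, ∀ (k : ℕ) (i j : Fin n), |(B ^ k) i j| ≤ C := by
  set Bc : Matrix (Fin n) (Fin n) ℂ := B.map (algebraMap ℝ ℂ) with hBc
  have hpow : ∀ k : ℕ, (B ^ k).map (algebraMap ℝ ℂ) = Bc ^ k := by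
    intro k
    rw [hBc, ← RingHom.mapMatrix_apply, ← RingHom.mapMatrix_apply, map_pow]
  have hcontmap : Continuous fun X : Mn n => X.map (algebraMap ℝ ℂ) := by
    apply continuous_pi
    intro i
    apply continuous_pi
    intro j
    exact Complex.continuous_ofReal.comp ((continuous_apply j).comp (continuous_apply i))
  have hBc1 : Tendsto (fun i => Bc ^ m i) atTop (𝓝 1) := by
    have h2 := (hcontmap.tendsto 1).comp h1
    have h3 : ((1 : Mn n).map (algebraMap ℝ ℂ)) = 1 := by
      rw [← RingHom.mapMatrix_apply, _root_.map_one]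
    simp only [Function.comp_def, hpow, h3] at h2
    exact h2
  obtain ⟨C, hC⟩ := diag_bound hm hBc1
  refine ⟨C, fun k i j => ?_⟩
  have h4 : (Bc ^ k) i j = ((B ^ k) i j : ℂ) := by
    rw [← hpow k, Matrix.map_apply]
    rfl
  have := hC k i j
  rw [h4, Complex.norm_real, Real.norm_eq_abs] at this
  exact this

lemma zpow_bound {A : GL (Fin n) ℝ} {m : ℕ → ℕ} (hm : Tendsto m atTop atTop)
    (hA : Tendsto (fun i => A ^ m i) atTop (𝓝 (1 : GL (Fin n) ℝ))) :
    ∃ C : ℝ, ∀ (k : ℤ) (i j : Fin n), |(((A ^ k : GL (Fin n) ℝ) : Mn n)) i j| ≤ C := by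
  have hcont : Continuous (e (n := n)) := isEmbedding_e.continuous
  have he := (hcont.tendsto 1).comp hA
  have he1 : e (1 : GL (Fin n) ℝ) = (1, 1) := by
    simp [e]
  rw [he1, nhds_prod_eq] at he
  have h1 : Tendsto (fun i => ((A : Mn n)) ^ m i) atTop (𝓝 1) := by
    have := he.fst
    simpa [e, Function.comp_def, Units.val_pow_eq_pow_val] using this
  have h2 : Tendsto (fun i => (((A⁻¹ : GL (Fin n) ℝ) : Mn n)) ^ m i) atTop (𝓝 1) := by
    have := he.snd
    simpa [e, Function.comp_def, inv_pow, Units.val_pow_eq_pow_val] using this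
  obtain ⟨C₁, hC₁⟩ := real_bound hm h1
  obtain ⟨C₂, hC₂⟩ := real_bound hm h2
  refine ⟨max C₁ C₂, fun k i j => ?_⟩
  rcases le_or_gt 0 k with hk | hk
  · have : A ^ k = A ^ (k.toNat) := by
      rw [← zpow_natCast, Int.toNat_of_nonneg hk]
    rw [this]
    calc |(((A ^ k.toNat : GL (Fin n) ℝ) : Mn n)) i j| = |((A : Mn n) ^ k.toNat) i j| := by
          rw [Units.val_pow_eq_pow_val]
      _ ≤ C₁ := hC₁ _ i j
      _ ≤ max C₁ C₂ := le_max_left _ _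
  · have : A ^ k = (A⁻¹) ^ ((-k).toNat) := by
      rw [← zpow_natCast, Int.toNat_of_nonneg (by omega : (0:ℤ) ≤ -k), _root_.inv_zpow', neg_neg]
    rw [this]
    calc |((((A⁻¹) ^ (-k).toNat : GL (Fin n) ℝ) : Mn n)) i j|
        = |(((A⁻¹ : GL (Fin n) ℝ) : Mn n) ^ (-k).toNat) i j| := by
          rw [Units.val_pow_eq_pow_val]
      _ ≤ C₂ := hC₂ _ i j
      _ ≤ max C₁ C₂ := le_max_right _ _

lemma compact_of_bound {A : GL (Fin n) ℝ}
    (h : ∃ C : ℝ, ∀ (k : ℤ) (i j : Fin n), |(((A ^ k : GL (Fin n) ℝ) : Mn n)) i j| ≤ C) :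
    IsCompact (closure (Set.range fun k : ℤ => A ^ k)) := by
  obtain ⟨C, hC⟩ := h
  set R : Set (GL (Fin n) ℝ) := Set.range (fun k : ℤ => A ^ k) with hR
  set Box : Set (Mn n) := Set.univ.pi fun _ : Fin n => Set.univ.pi fun _ : Fin n => Icc (-C) C
    with hBox
  have hBoxcomp : IsCompact Box :=
    isCompact_univ_pi fun _ => isCompact_univ_pi fun _ => isCompact_Icc
  have hBoxclosed : IsClosed Box :=
    isClosed_set_pi fun _ _ => isClosed_set_pi fun _ _ => isClosed_Icc
  have heR : e '' R ⊆ Box ×ˢ Box := by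
    rintro - ⟨-, ⟨k, rfl⟩, rfl⟩
    have heq : ((A ^ k)⁻¹ : GL (Fin n) ℝ) = A ^ (-k) := by rw [← _root_.zpow_neg]
    constructor
    · rw [hBox]
      refine Set.mem_univ_pi.mpr fun i => Set.mem_univ_pi.mpr fun j => ?_
      exact mem_Icc.mpr (abs_le.mp (hC k i j))
    · rw [hBox]
      refine Set.mem_univ_pi.mpr fun i => Set.mem_univ_pi.mpr fun j => ?_
      show ((((A ^ k : GL (Fin n) ℝ))⁻¹ : GL (Fin n) ℝ) : Mn n) i j ∈ Icc (-C) C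
      rw [heq]
      exact mem_Icc.mpr (abs_le.mp (hC (-k) i j))
  have hSclosed : IsClosed (closure (e '' R)) := isClosed_closure
  have hS : IsCompact (closure (e '' R)) :=
    (hBoxcomp.prod hBoxcomp).of_isClosed_subset hSclosed
      (closure_minimal heR (hBoxclosed.prod hBoxclosed))
  have hsub : closure (e '' R) ⊆ Set.range (e (n := n)) := by
    intro p hp
    rw [range_e]
    have hF : ClusterPt p (𝓟 (e '' R)) := mem_closure_iff_clusterPt.mp hp
    haveI : (𝓝 p ⊓ 𝓟 (e '' R)).NeBot := hF
    set F := 𝓝 p ⊓ 𝓟 (e '' R) with hFdef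
    have hmem : e '' R ∈ F := by
      rw [hFdef]
      exact mem_inf_of_right (mem_principal_self _)
    have hone : ∀ q ∈ e '' R, q.1 * q.2 = 1 ∧ q.2 * q.1 = 1 := by
      rintro - ⟨g, -, rfl⟩
      constructor
      · exact_mod_cast Units.mul_inv g
      · exact_mod_cast Units.inv_mul g
    have ht1 : Tendsto (fun q : Mn n × Mn n => q.1 * q.2) F (𝓝 (p.1 * p.2)) :=
      ((continuous_fst.mul continuous_snd).tendsto p).mono_left inf_le_left
    have ht1' : Tendsto (fun q : Mn n × Mn n => q.1 * q.2) F (𝓝 1) := by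
      refine Tendsto.congr' ?_ tendsto_const_nhds
      filter_upwards [hmem] with q hq
      exact ((hone q hq).1).symm
    have ht2 : Tendsto (fun q : Mn n × Mn n => q.2 * q.1) F (𝓝 (p.2 * p.1)) :=
      ((continuous_snd.mul continuous_fst).tendsto p).mono_left inf_le_left
    have ht2' : Tendsto (fun q : Mn n × Mn n => q.2 * q.1) F (𝓝 1) := by
      refine Tendsto.congr' ?_ tendsto_const_nhds
      filter_upwards [hmem] with q hq
      exact ((hone q hq).2).symm
    exact ⟨tendsto_nhds_unique ht1 ht1', tendsto_nhds_unique ht2 ht2'⟩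
  have hT : IsCompact (e ⁻¹' (closure (e '' R))) := by
    rw [isEmbedding_e.isCompact_iff]
    rw [Set.image_preimage_eq_of_subset hsub]
    exact hS
  refine hT.of_isClosed_subset isClosed_closure
    (closure_minimal ?_ (hSclosed.preimage isEmbedding_e.continuous))
  intro g hg
  exact subset_closure (Set.mem_image_of_mem _ hg)


lemma closed_discrete {A : GL (Fin n) ℝ}
    (h : Tendsto (fun k : ℤ => A ^ k) cofinite (cocompact (GL (Fin n) ℝ))) :
    IsClosed (Set.range fun k : ℤ => A ^ k) ∧
      DiscreteTopology (Set.range fun k : ℤ => A ^ k) := by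
  have hfin : ∀ K : Set (GL (Fin n) ℝ), IsCompact K → ((fun k : ℤ => A ^ k) ⁻¹' K).Finite :=
    tendsto_cofinite_cocompact_iff.mp h
  set R : Set (GL (Fin n) ℝ) := Set.range fun k : ℤ => A ^ k with hRdef
  have hRK : ∀ K : Set (GL (Fin n) ℝ), IsCompact K → (R ∩ K).Finite := by
    intro K hK
    refine ((hfin K hK).image (fun k : ℤ => A ^ k)).subset ?_
    rintro x ⟨⟨k, rfl⟩, hxK⟩
    exact ⟨k, hxK, rfl⟩
  have hclosed : IsClosed R := by
    rw [← closure_subset_iff_isClosed]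
    intro x hx
    obtain ⟨K, hKc, hKn⟩ := exists_compact_mem_nhds x
    have hx2 : x ∈ closure (R ∩ K) := by
      rw [mem_closure_iff_nhds] at hx ⊢
      intro U hU
      obtain ⟨y, hy1, hy2⟩ := hx (U ∩ K) (inter_mem hU hKn)
      exact ⟨y, hy1.1, hy2, hy1.2⟩
    rw [((hRK K hKc).isClosed).closure_eq] at hx2
    exact hx2.1
  refine ⟨hclosed, ?_⟩
  have hval : Tendsto (Subtype.val : R → GL (Fin n) ℝ) cofinite (cocompact _) := by
    rw [tendsto_cofinite_cocompact_iff]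
    intro K hK
    have hpre : (Subtype.val ⁻¹' K : Set R) = Subtype.val ⁻¹' (R ∩ K) := by
      ext x
      simp [x.2]
    rw [hpre]
    exact (hRK K hK).preimage (Set.injOn_of_injective Subtype.val_injective)
  exact continuous_subtype_val.discrete_of_tendsto_cofinite_cocompact hval


lemma tendsto_combine {α : Type*} [TopologicalSpace α] {f g F : ℕ → α} {S : Set ℕ} {a : α}
    (hf : Tendsto f atTop (𝓝 a)) (hg : Tendsto g atTop (𝓝 a))
    (h1 : ∀ i ∈ S, F i = f i) (h2 : ∀ i ∉ S, F i = g i) : Tendsto F atTop (𝓝 a) := by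
  have t1 : Tendsto F (atTop ⊓ 𝓟 S) (𝓝 a) := by
    refine (hf.mono_left inf_le_left).congr' ?_
    filter_upwards [mem_inf_of_right (mem_principal_self S)] with i hi
    exact (h1 i hi).symm
  have t2 : Tendsto F (atTop ⊓ 𝓟 Sᶜ) (𝓝 a) := by
    refine (hg.mono_left inf_le_left).congr' ?_
    filter_upwards [mem_inf_of_right (mem_principal_self Sᶜ)] with i hi
    exact (h2 i hi).symm
  have hsplit : (atTop : Filter ℕ) = (atTop ⊓ 𝓟 S) ⊔ (atTop ⊓ 𝓟 Sᶜ) := by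
    rw [← inf_sup_left, sup_principal, union_compl_self, principal_univ, inf_top_eq]
  rw [hsplit]
  exact tendsto_sup.mpr ⟨t1, t2⟩

lemma compact_closure_of_not_tendsto {A : GL (Fin n) ℝ}
    (h : ¬ Tendsto (fun k : ℤ => A ^ k) cofinite (cocompact (GL (Fin n) ℝ))) :
    IsCompact (closure (Set.range fun k : ℤ => A ^ k)) := by
  rw [tendsto_cofinite_cocompact_iff] at h
  push_neg at h
  obtain ⟨K, hKc, hKinf⟩ := h
  have hinf : ((fun k : ℤ => A ^ k) ⁻¹' K).Infinite := hKinf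
  let t0 := hinf.natEmbedding
  set t : ℕ → ℤ := fun i => (t0 i : ℤ) with ht
  have htinj : Function.Injective t := fun a b hab => t0.injective (Subtype.ext hab)
  have htK : ∀ i, A ^ (t i) ∈ K := fun i => (t0 i).2
  have hKcomp' : IsCompact (e '' K) := hKc.image isEmbedding_e.continuous
  obtain ⟨p, _, σ, hσ, hconv⟩ := hKcomp'.tendsto_subseq
    (x := fun i => e (A ^ t i)) (fun i => Set.mem_image_of_mem _ (htK i))
  have hX : Tendsto (fun i => ((A ^ t (σ i) : GL (Fin n) ℝ) : Mn n)) atTop (𝓝 p.1) :=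
    (continuous_fst.tendsto p).comp hconv
  have hY : Tendsto (fun i => (((A ^ t (σ i))⁻¹ : GL (Fin n) ℝ) : Mn n)) atTop (𝓝 p.2) :=
    (continuous_snd.tendsto p).comp hconv
  have hXY : p.1 * p.2 = 1 := by
    have h1 : Tendsto (fun i => ((A ^ t (σ i) : GL (Fin n) ℝ) : Mn n) *
        (((A ^ t (σ i))⁻¹ : GL (Fin n) ℝ) : Mn n)) atTop (𝓝 (p.1 * p.2)) := hX.mul hY
    have h2 : (fun i => ((A ^ t (σ i) : GL (Fin n) ℝ) : Mn n) *
        (((A ^ t (σ i))⁻¹ : GL (Fin n) ℝ) : Mn n)) = fun _ => (1 : Mn n) := by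
      funext i
      exact Units.mul_inv _
    rw [h2] at h1
    exact (tendsto_nhds_unique tendsto_const_nhds h1).symm
  set d : ℕ → ℤ := fun i => t (σ (i+1)) - t (σ i) with hd
  have hdne : ∀ i, d i ≠ 0 := by
    intro i hzero
    have : t (σ (i+1)) = t (σ i) := by
      have := sub_eq_zero.mp hzero
      exact this
    exact absurd (htinj this) (Nat.ne_of_gt (hσ (Nat.lt_succ_self i)))
  have hXs : Tendsto (fun i => ((A ^ t (σ (i+1)) : GL (Fin n) ℝ) : Mn n)) atTop (𝓝 p.1) :=
    hX.comp (tendsto_add_atTop_nat 1)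
  have hYs : Tendsto (fun i => (((A ^ t (σ (i+1)))⁻¹ : GL (Fin n) ℝ) : Mn n)) atTop (𝓝 p.2) :=
    hY.comp (tendsto_add_atTop_nat 1)
  have hval : ∀ (a b : ℤ), ((A ^ (a - b) : GL (Fin n) ℝ) : Mn n) =
      ((A ^ a : GL (Fin n) ℝ) : Mn n) * (((A ^ b)⁻¹ : GL (Fin n) ℝ) : Mn n) := by
    intro a b
    rw [_root_.zpow_sub, Units.val_mul]
  have hd1 : Tendsto (fun i => ((A ^ d i : GL (Fin n) ℝ) : Mn n)) atTop (𝓝 1) := by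
    have h1 := hXs.mul hY
    rw [hXY] at h1
    refine Tendsto.congr ?_ h1
    intro i
    exact (hval (t (σ (i+1))) (t (σ i))).symm
  have hd2 : Tendsto (fun i => ((A ^ (-(d i)) : GL (Fin n) ℝ) : Mn n)) atTop (𝓝 1) := by
    have h1 := hX.mul hYs
    rw [hXY] at h1
    refine Tendsto.congr ?_ h1
    intro i
    have : -(d i) = t (σ i) - t (σ (i+1)) := by rw [hd]; ring
    rw [this]
    exact (hval (t (σ i)) (t (σ (i+1)))).symm
  by_cases hcase : ∃ z : ℤ, {i | d i = z}.Infinite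
  · -- A has finite order
    obtain ⟨z, hz⟩ := hcase
    obtain ⟨i₀, hi₀⟩ := hz.nonempty
    have hzne : z ≠ 0 := hi₀ ▸ hdne i₀
    have hne : (atTop ⊓ 𝓟 {i | d i = z}).NeBot := by
      rw [← frequently_iff_neBot]
      rw [Nat.frequently_atTop_iff_infinite]
      exact hz
    have hlim1 : Tendsto (fun i => ((A ^ d i : GL (Fin n) ℝ) : Mn n))
        (atTop ⊓ 𝓟 {i | d i = z}) (𝓝 1) := hd1.mono_left inf_le_left
    have hconst : Tendsto (fun i => ((A ^ d i : GL (Fin n) ℝ) : Mn n))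
        (atTop ⊓ 𝓟 {i | d i = z}) (𝓝 ((A ^ z : GL (Fin n) ℝ) : Mn n)) := by
      refine Tendsto.congr' ?_ tendsto_const_nhds
      filter_upwards [mem_inf_of_right (mem_principal_self {i | d i = z})] with i hi
      rw [show d i = z from hi]
    have hAz : A ^ z = 1 := Units.ext (tendsto_nhds_unique hconst hlim1)
    have hfin : (Set.range fun k : ℤ => A ^ k).Finite := by
      set w : ℕ := z.natAbs with hwdef
      have hw : 0 < w := Int.natAbs_pos.mpr hzne
      have hAw : A ^ (w : ℤ) = 1 := by
        have h5 : ((w : ℤ)) = z ∨ ((w : ℤ)) = -z := by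
          rw [hwdef]; omega
        rcases h5 with h5 | h5
        · rw [h5, hAz]
        · rw [h5, _root_.zpow_neg, hAz, inv_one]
      apply (Set.Finite.image (fun k : ℤ => A ^ k) (Set.finite_Ico (0:ℤ) (w:ℤ))).subset
      rintro - ⟨k, rfl⟩
      refine ⟨k % (w:ℤ), ?_, ?_⟩
      · refine mem_Ico.mpr ⟨Int.emod_nonneg k (by exact_mod_cast hw.ne'), ?_⟩
        exact Int.emod_lt_of_pos k (by exact_mod_cast hw)
      · show A ^ (k % (w:ℤ)) = A ^ k
        conv_rhs => rw [← Int.emod_add_mul_ediv k (w:ℤ)]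
        rw [_root_.zpow_add, _root_.zpow_mul, hAw, _root_.one_zpow, mul_one]
    rw [hfin.isClosed.closure_eq]
    exact hfin.isCompact
  · push_neg at hcase
    set m : ℕ → ℕ := fun i => (d i).natAbs with hm
    have hmt : Tendsto m atTop atTop := by
      rw [tendsto_atTop]
      intro N
      have hfin2 : {i | (d i).natAbs < N}.Finite := by
        have hsub : {i | (d i).natAbs < N} ⊆ ⋃ z ∈ Set.Ioo (-(N:ℤ)) (N:ℤ), {i | d i = z} := by
          intro i hi
          simp only [Set.mem_iUnion]
          refine ⟨d i, ?_, rfl⟩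
          simp only [Set.mem_Ioo]
          have : (d i).natAbs < N := hi
          omega
        exact ((Set.finite_Ioo _ _).biUnion
          (fun z _ => hcase z)).subset hsub
      rw [← Nat.cofinite_eq_atTop]
      refine eventually_cofinite.mpr ?_
      simpa [hm, not_le] using hfin2
    have hSmem : ∀ i, 0 ≤ d i → ((m i : ℤ)) = d i := fun i hi => Int.natAbs_of_nonneg hi
    have hSmem' : ∀ i, ¬ (0 ≤ d i) → ((m i : ℤ)) = -(d i) := by
      intro i hi
      show ((d i).natAbs : ℤ) = -(d i)
      omega
    have c1 : Tendsto (fun i => ((A ^ ((m i : ℤ)) : GL (Fin n) ℝ) : Mn n)) atTop (𝓝 1) := by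
      refine tendsto_combine (S := {i | 0 ≤ d i}) hd1 hd2 ?_ ?_
      · intro i hi
        rw [hSmem i hi]
      · intro i hi
        rw [hSmem' i hi]
    have c2 : Tendsto (fun i => ((((A ^ ((m i : ℤ)) : GL (Fin n) ℝ))⁻¹ : GL (Fin n) ℝ) : Mn n))
        atTop (𝓝 1) := by
      have heq : ∀ i, ((((A ^ ((m i : ℤ)) : GL (Fin n) ℝ))⁻¹ : GL (Fin n) ℝ) : Mn n)
          = ((A ^ (-(m i : ℤ)) : GL (Fin n) ℝ) : Mn n) := by
        intro i
        rw [_root_.zpow_neg]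
      refine Tendsto.congr (fun i => (heq i).symm) ?_
      refine tendsto_combine (S := {i | 0 ≤ d i}) hd2 hd1 ?_ ?_
      · intro i hi
        rw [hSmem i hi]
      · intro i hi
        rw [hSmem' i hi, neg_neg]
    have hA1 : Tendsto (fun i => A ^ m i) atTop (𝓝 (1 : GL (Fin n) ℝ)) := by
      rw [isEmbedding_e.toIsInducing.tendsto_nhds_iff]
      have he1 : e (1 : GL (Fin n) ℝ) = ((1 : Mn n), (1 : Mn n)) := by simp [e]
      rw [he1]
      have hzn : ∀ i, A ^ m i = A ^ ((m i : ℤ)) := fun i => (zpow_natCast A (m i)).symm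
      rw [nhds_prod_eq]
      refine Tendsto.prodMk ?_ ?_
      · refine Tendsto.congr (fun i => ?_) c1
        show ((A ^ ((m i : ℤ)) : GL (Fin n) ℝ) : Mn n) = ((A ^ m i : GL (Fin n) ℝ) : Mn n)
        rw [hzn i]
      · refine Tendsto.congr (fun i => ?_) c2
        show ((((A ^ ((m i : ℤ)) : GL (Fin n) ℝ))⁻¹ : GL (Fin n) ℝ) : Mn n)
          = ((((A ^ m i : GL (Fin n) ℝ))⁻¹ : GL (Fin n) ℝ) : Mn n)
        rw [hzn i]
    exact compact_of_bound (zpow_bound hmt hA1)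


end St11

open Filter in
theorem statement11 (n : ℕ) (hn : 1 ≤ n) (A : GL (Fin n) ℝ) :
    IsCompact (closure (Set.range fun k : ℤ => A ^ k)) ∨
    (IsClosed (Set.range fun k : ℤ => A ^ k) ∧
      DiscreteTopology (Set.range fun k : ℤ => A ^ k)) := by
  by_cases h : Tendsto (fun k : ℤ => A ^ k) cofinite (cocompact (GL (Fin n) ℝ))
  · right
    exact St11.closed_discrete h
  · left
    exact St11.compact_closure_of_not_tendsto h
end

section
/- Let n ≥ 1 and let A ∈ GL_n(ℝ). Then some positive power of A belongs to a one-parameter subgroup of GL_n(ℝ): there exist a positive integer k and a real n×n matrix X such that exp(X) = A^k (in fact k = 2 works, i.e. A² is the exponential of a real matrix). -/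
/-!
Statement 12: for `A ∈ GL_n(ℝ)`, some positive power of `A` lies on a one-parameter
subgroup of `GL_n(ℝ)`: there are `k > 0` and a real matrix `X` with `exp X = A ^ k`;
in fact `k = 2` works, i.e. `A ^ 2` is the exponential of a real matrix.
-/


open Polynomial

noncomputable def logPoly (d : ℕ) : Polynomial ℝ :=
  ∑ j ∈ Finset.range d, ((-1 : ℝ)^j * ((j : ℝ)+1)⁻¹) • X^(j+1)

noncomputable def expPoly (d K : ℕ) : Polynomial ℝ :=
  ∑ k ∈ Finset.range K, ((k.factorial : ℝ))⁻¹ • (logPoly d)^k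

lemma X_dvd_logPoly (d : ℕ) : X ∣ logPoly d := by
  rw [X_dvd_iff, logPoly]
  simp [coeff_X_pow]

lemma derivative_logPoly (d : ℕ) :
    derivative (logPoly d) = ∑ j ∈ Finset.range d, (-X : Polynomial ℝ)^j := by
  rw [logPoly, map_sum]
  refine Finset.sum_congr rfl fun j hj => ?_
  rw [derivative_smul, derivative_X_pow, smul_eq_C_mul]
  have hX : ((-X : Polynomial ℝ))^j = C ((-1:ℝ)^j) * X^j := by
    rw [neg_pow, C_pow, C_neg, C_1]
  rw [hX]
  push_cast
  rw [← mul_assoc, ← C_mul]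
  congr 1
  have hne : ((j : ℝ) + 1) ≠ 0 := by positivity
  field_simp

lemma one_add_X_mul_geom (d : ℕ) :
    (1 + X : Polynomial ℝ) * ∑ j ∈ Finset.range d, (-X : Polynomial ℝ)^j
      = 1 - (-X)^d := by
  have h := geom_sum_mul (-X : Polynomial ℝ) d
  linear_combination (-1 : Polynomial ℝ) * h

lemma derivative_expPoly (d K : ℕ) :
    derivative (expPoly d (K+1)) = derivative (logPoly d) * expPoly d K := by
  rw [expPoly, map_sum, Finset.sum_range_succ']
  have h0 : derivative (((Nat.factorial 0 : ℝ))⁻¹ • (logPoly d)^0) = 0 := by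
    simp
  rw [h0, add_zero, expPoly, Finset.mul_sum]
  refine Finset.sum_congr rfl fun k hk => ?_
  rw [derivative_smul, derivative_pow]
  rw [smul_eq_C_mul, smul_eq_C_mul]
  have h1 : ((Nat.factorial (k+1) : ℝ))⁻¹ * (((k:ℕ) : ℝ) + 1) = ((Nat.factorial k : ℝ))⁻¹ := by
    rw [Nat.factorial_succ]
    push_cast
    have : ((k:ℝ) + 1) ≠ 0 := by positivity
    have : (Nat.factorial k : ℝ) ≠ 0 := Nat.cast_ne_zero.mpr k.factorial_ne_zero
    field_simp
  calc C ((Nat.factorial (k+1) : ℝ))⁻¹ * (C (((k+1) : ℕ) : ℝ) * (logPoly d)^(k+1-1) * derivative (logPoly d))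
      = C (((Nat.factorial (k+1) : ℝ))⁻¹ * (((k:ℕ) : ℝ) + 1)) * ((logPoly d)^k * derivative (logPoly d)) := by
        push_cast
        rw [C_mul]
        ring
    _ = derivative (logPoly d) * (C ((Nat.factorial k : ℝ))⁻¹ * (logPoly d)^k) := by
        rw [h1]; ring

lemma key_relation (d : ℕ) :
    ∃ J : Polynomial ℝ, (1 + X) * derivative (expPoly d (d+1))
      = expPoly d (d+1) + X^d * J := by
  obtain ⟨r, hr⟩ := X_dvd_logPoly d
  have h1 : derivative (expPoly d (d+1)) = derivative (logPoly d) * expPoly d d :=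
    derivative_expPoly d d
  have h2 : (1 + X : Polynomial ℝ) * derivative (logPoly d) = 1 - (-X)^d := by
    rw [derivative_logPoly]
    exact one_add_X_mul_geom d
  have h3 : expPoly d (d+1) = expPoly d d + ((Nat.factorial d : ℝ))⁻¹ • (logPoly d)^d := by
    rw [expPoly, expPoly, Finset.sum_range_succ]
  refine ⟨-(((Nat.factorial d : ℝ))⁻¹ • r^d) - ((-1 : Polynomial ℝ))^d * expPoly d d, ?_⟩
  have hld : (logPoly d)^d = X^d * r^d := by
    rw [hr, mul_pow]
  have hnX : ((-X : Polynomial ℝ))^d = (-1)^d * X^d := by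
    rw [neg_pow]
  calc (1 + X) * derivative (expPoly d (d+1))
      = ((1 + X) * derivative (logPoly d)) * expPoly d d := by rw [h1]; ring
    _ = (1 - (-X)^d) * expPoly d d := by rw [h2]
    _ = expPoly d (d+1) + X^d * (-(((Nat.factorial d : ℝ))⁻¹ • r^d) - ((-1 : Polynomial ℝ))^d * expPoly d d) := by
        rw [h3, hnX, smul_eq_C_mul, smul_eq_C_mul, hld]
        ring

lemma expPoly_coeff_zero (d : ℕ) : (expPoly d (d+1)).coeff 0 = 1 := by
  obtain ⟨r, hr⟩ := X_dvd_logPoly d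
  rw [expPoly]
  rw [finset_sum_coeff]
  rw [Finset.sum_eq_single 0]
  · simp
  · intro k hk hk0
    rw [coeff_smul]
    obtain ⟨k', rfl⟩ := Nat.exists_eq_succ_of_ne_zero hk0
    have : (logPoly d)^(k'+1) = X * (r * (X*r)^k') := by
      rw [hr]; ring
    rw [this, mul_coeff_zero, coeff_X_zero, zero_mul, smul_zero]
  · intro h; simp at h


lemma expPoly_coeff_rec (d : ℕ) (i : ℕ) (hi : i < d) :
    (expPoly d (d+1)).coeff (i+1) * ((i:ℝ)+1) + (expPoly d (d+1)).coeff i * i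
      = (expPoly d (d+1)).coeff i := by
  obtain ⟨J, hJ⟩ := key_relation d
  set F := expPoly d (d+1) with hF
  have hcoeff := congrArg (fun p => coeff p i) hJ
  have hXJ : (X^d * J).coeff i = 0 := by
    have : (X:Polynomial ℝ)^d ∣ X^d * J := dvd_mul_right _ _
    exact X_pow_dvd_iff.mp this i hi
  rw [coeff_add, hXJ, add_zero] at hcoeff
  have hlhs : ((1 + X) * derivative F).coeff i
      = (derivative F).coeff i + (X * derivative F).coeff i := by
    rw [add_mul, one_mul, coeff_add]
  rw [hlhs] at hcoeff
  rcases i with _ | i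
  · rw [mul_coeff_zero, coeff_X_zero, zero_mul, add_zero] at hcoeff
    rw [coeff_derivative] at hcoeff
    push_cast
    rw [mul_zero, add_zero]
    push_cast at hcoeff
    linarith [hcoeff]
  · rw [coeff_X_mul, coeff_derivative, coeff_derivative] at hcoeff
    push_cast
    push_cast at hcoeff
    linarith [hcoeff]

lemma expPoly_coeff_eq (d : ℕ) (i : ℕ) (hi : i ≤ d) :
    (expPoly d (d+1)).coeff i = if i = 0 ∨ i = 1 then 1 else 0 := by
  induction i with
  | zero => simp [expPoly_coeff_zero]
  | succ i ih =>
    have hid : i < d := lt_of_lt_of_le (Nat.lt_succ_self i) (by omega)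
    have hrec := expPoly_coeff_rec d i hid
    have ih' := ih (le_of_lt hid)
    have hne : ((i:ℝ)+1) ≠ 0 := by positivity
    rcases Nat.eq_zero_or_pos i with rfl | hpos
    · simp only [Nat.cast_zero] at hrec
      simp only [eq_self_iff_true, true_or, if_true] at ih' ⊢
      rw [ih'] at hrec
      norm_num at hrec ⊢
      linarith [hrec]
    · rcases Nat.lt_or_ge i 2 with h2 | h2
      · interval_cases i
        · simp only [true_or, or_true, if_true] at ih'
          simp only [Nat.cast_one] at hrec
          rw [ih'] at hrec
          have : (expPoly d (d+1)).coeff 2 * 2 = 0 := by linarith [hrec]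
          have h22 : (expPoly d (d+1)).coeff 2 = 0 := by linarith [this]
          norm_num [h22]
      · have : ¬ (i = 0 ∨ i = 1) := by omega
        rw [if_neg this] at ih'
        rw [ih', zero_mul, add_zero] at hrec
        have hne2 : ¬ (i + 1 = 0 ∨ i + 1 = 1) := by omega
        rw [if_neg hne2]
        exact (mul_eq_zero.mp hrec).resolve_right hne

lemma X_pow_dvd_expPoly_sub (d : ℕ) :
    (X : Polynomial ℝ)^(d+1) ∣ (expPoly d (d+1) - (1 + X)) := by
  rw [X_pow_dvd_iff]
  intro i hi
  rw [coeff_sub, expPoly_coeff_eq d i (by omega)]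
  rcases i with _ | i
  · simp
  · rcases Nat.eq_zero_or_pos i with rfl | hpos
    · simp [coeff_one]
    · have : ¬ (i + 1 = 0 ∨ i + 1 = 1) := by omega
      rw [if_neg this]
      simp only [coeff_add, coeff_one, coeff_X]
      have h1 : ¬ (i + 1 = 0) := by omega
      have h2 : ¬ (1 = i + 1) := by omega
      simp [h1, h2]
      omega

open NormedSpace in
lemma exp_of_unipotent {B : Type*} [NormedRing B] [NormedAlgebra ℝ B] [CompleteSpace B]
    {m : B} (hm : IsNilpotent m) : ∃ L : B, exp L = 1 + m := by
  obtain ⟨d, hd⟩ := hm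
  have hd1 : m ^ (d+1) = 0 := by rw [pow_succ, hd, zero_mul]
  obtain ⟨r, hr⟩ := X_dvd_logPoly (d+1)
  set l := logPoly (d+1) with hl
  set L := aeval m l with hL
  -- L = m * (aeval m r) and they commute
  have hLm : L = m * aeval m r := by rw [hL, hr, map_mul, aeval_X]
  have hcomm : Commute m (aeval m r) := by
    have h1 : m * aeval m r = aeval m (X * r) := by rw [map_mul, aeval_X]
    have h2 : aeval m r * m = aeval m (r * X) := by rw [map_mul, aeval_X]
    rw [Commute, SemiconjBy, h1, h2, mul_comm r X]
  have hLpow : L ^ (d+2) = 0 := by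
    rw [hLm, hcomm.mul_pow, pow_succ m (d+1), hd1, zero_mul, zero_mul]
  refine ⟨L, ?_⟩
  rw [exp_eq_tsum ℝ]
  show (∑' k : ℕ, ((k.factorial : ℝ))⁻¹ • L ^ k) = 1 + m
  have hsum : ∑' k : ℕ, ((k.factorial : ℝ))⁻¹ • L ^ k
      = ∑ k ∈ Finset.range (d+2), ((k.factorial : ℝ))⁻¹ • L ^ k := by
    refine tsum_eq_sum ?_
    intro k hk
    have hk' : d + 2 ≤ k := by simpa using hk
    have : L ^ k = 0 := pow_eq_zero_of_le hk' hLpow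
    rw [this, smul_zero]
  rw [hsum]
  have haeval : ∑ k ∈ Finset.range (d+2), ((k.factorial : ℝ))⁻¹ • L ^ k
      = aeval m (expPoly (d+1) (d+2)) := by
    rw [expPoly, map_sum]
    refine Finset.sum_congr rfl fun k _ => ?_
    rw [map_smul, map_pow]
  rw [haeval]
  obtain ⟨g, hg⟩ := X_pow_dvd_expPoly_sub (d+1)
  have hpoly : expPoly (d+1) (d+2) = (1 + X) + X^(d+2) * g := by
    rw [← hg]; ring
  have hd2 : m ^ (d+2) = 0 := by rw [pow_succ, hd1, zero_mul]
  rw [hpoly, map_add, map_add, map_one, aeval_X, map_mul, map_pow, aeval_X, hd2,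
    zero_mul, add_zero]

lemma log_mem_subalgebra (K : Subalgebra ℝ ℂ) {w : ℂ} (hw : w ∈ K) (h0 : w ≠ 0) :
    ∃ c ∈ K, Complex.exp c = w ^ 2 := by
  by_cases him : w.im = 0
  · have hre : w = (w.re : ℂ) := by
      apply Complex.ext <;> simp [him]
    have hrene : w.re ≠ 0 := by
      intro h
      apply h0
      rw [hre, h, Complex.ofReal_zero]
    refine ⟨((Real.log (w.re^2) : ℝ) : ℂ), ?_, ?_⟩
    · have : ((Real.log (w.re^2) : ℝ) : ℂ) = algebraMap ℝ ℂ (Real.log (w.re^2)) := rfl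
      rw [this]
      exact K.algebraMap_mem _
    · rw [← Complex.ofReal_exp, Real.exp_log (by positivity)]
      rw [hre]
      simp
  · have hI : Complex.I ∈ K := by
      have h1 : ((w.re : ℝ) : ℂ) ∈ K := K.algebraMap_mem w.re
      have h2 : w - (w.re : ℂ) ∈ K := K.sub_mem hw h1
      have h3 : (w.im)⁻¹ • (w - (w.re : ℂ)) = Complex.I := by
        have h5 := Complex.re_add_im w
        have h4 : w - (w.re : ℂ) = (w.im : ℂ) * Complex.I := by
          linear_combination -h5
        rw [h4, Complex.real_smul, ← mul_assoc, ← Complex.ofReal_mul,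
          inv_mul_cancel₀ him, Complex.ofReal_one, one_mul]
      rw [← h3]
      exact K.smul_mem h2 _
    set c := Complex.log (w^2) with hc
    refine ⟨c, ?_, Complex.exp_log (pow_ne_zero 2 h0)⟩
    rw [← Complex.re_add_im c]
    exact K.add_mem (K.algebraMap_mem c.re)
      (K.mul_mem (K.algebraMap_mem c.im) hI)

set_option synthInstance.maxHeartbeats 1000000 in
set_option maxHeartbeats 2000000 in
open NormedSpace in
lemma exp_sq_of_unit {B : Type*} [NormedCommRing B] [NormedAlgebra ℝ B] [CompleteSpace B]
    [FiniteDimensional ℝ B] (u : Bˣ) : ∃ y : B, exp y = (u : B)^2 := by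
  letI : NormedAlgebra ℚ B := NormedAlgebra.restrictScalars ℚ ℝ B
  haveI : IsArtinianRing B := isArtinian_of_tower ℝ inferInstance
  haveI := (IsArtinianRing.setOfPred_isMaximal_finite B).to_subtype
  -- key pointwise statement for each maximal ideal
  have key : ∀ I : Ideal B, I.IsMaximal → ∃ l : B ⧸ I, ∀ y : B,
      Ideal.Quotient.mk I y = l → exp y - (u : B)^2 ∈ I := by
    intro I hI
    haveI := hI
    letI : Field (B ⧸ I) := Ideal.Quotient.field I
    haveI : FiniteDimensional ℝ (B ⧸ I) :=
      Module.Finite.of_surjective (Ideal.Quotient.mkₐ ℝ I).toLinearMap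
        (Ideal.Quotient.mkₐ_surjective ℝ I)
    haveI : Algebra.IsAlgebraic ℝ (B ⧸ I) := Algebra.IsAlgebraic.of_finite ℝ _
    let χ : (B ⧸ I) →ₐ[ℝ] ℂ := IsAlgClosed.lift
    have hinj : Function.Injective χ := χ.toRingHom.injective
    let ψ : B →ₐ[ℝ] ℂ := χ.comp (Ideal.Quotient.mkₐ ℝ I)
    have hcont : Continuous ψ := LinearMap.continuous_of_finiteDimensional ψ.toLinearMap
    have hw0 : χ (Ideal.Quotient.mk I (u : B)) ≠ 0 := by
      have h1 : IsUnit (ψ (u : B)) := (Units.isUnit u).map ψ.toMonoidHom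
      exact h1.ne_zero
    obtain ⟨c, hcK, hc⟩ := log_mem_subalgebra χ.range
      (show χ (Ideal.Quotient.mk I (u : B)) ∈ χ.range from ⟨_, rfl⟩) hw0
    obtain ⟨l, hl⟩ := hcK
    refine ⟨l, fun y hy => ?_⟩
    have h2 : ψ (exp y) = exp (ψ y) := map_exp ψ hcont y
    have h3 : ψ y = c := by
      show χ (Ideal.Quotient.mk I y) = c
      rw [hy]
      exact hl
    have h4 : exp (ψ y) = Complex.exp c := by
      rw [h3, ← Complex.exp_eq_exp_ℂ]
    have h5 : ψ (exp y) = ψ ((u : B)^2) := by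
      rw [h2, h4, hc]
      show _ = ψ ((u : B)^2)
      rw [map_pow]
      rfl
    have h6 : χ (Ideal.Quotient.mk I (exp y - (u : B)^2)) = 0 := by
      have : Ideal.Quotient.mk I (exp y - (u : B)^2)
          = Ideal.Quotient.mk I (exp y) - Ideal.Quotient.mk I ((u : B)^2) := by
        rw [map_sub]
      rw [this, map_sub]
      have h7 : χ (Ideal.Quotient.mk I (exp y)) = ψ (exp y) := rfl
      have h8 : χ (Ideal.Quotient.mk I ((u:B)^2)) = ψ ((u:B)^2) := rfl
      rw [h7, h8, h5, sub_self]
    have h9 : Ideal.Quotient.mk I (exp y - (u : B)^2) = 0 := by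
      apply hinj
      rw [h6, map_zero]
    exact Ideal.Quotient.eq_zero_iff_mem.mp h9
  -- CRT
  choose l hl using fun I : {I : Ideal B | I.IsMaximal} => key I.1 I.2
  have hcop : Pairwise fun i j : {I : Ideal B | I.IsMaximal} => IsCoprime (i.1) (j.1) := by
    intro i j hij
    rw [Ideal.isCoprime_iff_sup_eq]
    exact Ideal.IsMaximal.coprime_of_ne i.2 j.2 (fun h => hij (Subtype.coe_injective h))
  obtain ⟨y, hy⟩ := Ideal.pi_quotient_surjective hcop l
  -- the error term is nilpotent
  set r := exp y - (u : B)^2 with hr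
  have hrJ : IsNilpotent r := by
    obtain ⟨k, hk⟩ := IsArtinianRing.isNilpotent_jacobson_bot (R := B)
    refine ⟨k, ?_⟩
    have hmem : r ∈ (⊥ : Ideal B).jacobson := by
      rw [Ideal.jacobson]
      rw [Ideal.mem_sInf]
      intro J hJ
      exact hl ⟨J, hJ.2⟩ y (hy ⟨J, hJ.2⟩)
    have := Ideal.pow_mem_pow hmem k
    rw [hk] at this
    exact Ideal.mem_bot.mp this
  -- algebraic manipulation
  set v := ((u⁻¹ : Bˣ) : B)^2 * r with hv
  have hvnil : IsNilpotent v := (Commute.all _ _).isNilpotent_mul_left hrJ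
  have huv : (u : B)^2 * (1 + v) = exp y := by
    have h1 : (u : B)^2 * ((u⁻¹ : Bˣ) : B)^2 = 1 := by
      rw [← mul_pow, Units.mul_inv, one_pow]
    calc (u : B)^2 * (1 + v) = (u:B)^2 + ((u : B)^2 * ((u⁻¹ : Bˣ) : B)^2) * r := by
          rw [hv]; ring
      _ = (u:B)^2 + r := by rw [h1, one_mul]
      _ = exp y := by rw [hr]; ring
  have hunit : IsUnit (1 + v) := hvnil.isUnit_one_add
  set w := hunit.unit with hwdef
  have hw : (w : B) = 1 + v := hunit.unit_spec
  set v' := ((w⁻¹ : Bˣ) : B) - 1 with hv'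
  have h1v' : 1 + v' = ((w⁻¹ : Bˣ) : B) := by rw [hv']; ring
  have h3 : (1 + v) * ((w⁻¹ : Bˣ) : B) = 1 := by
    rw [← hw]
    exact w.mul_inv
  have hv'nil : IsNilpotent v' := by
    have h2 : v' = -v * ((w⁻¹ : Bˣ) : B) := by
      rw [hv']
      linear_combination h3
    rw [h2]
    exact (Commute.all _ _).isNilpotent_mul_right hvnil.neg
  obtain ⟨L, hL⟩ := exp_of_unipotent hv'nil
  refine ⟨y + L, ?_⟩
  rw [exp_add, hL, h1v', ← huv]
  linear_combination ((u : B)^2) * h3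

open Matrix

set_option synthInstance.maxHeartbeats 1000000 in
set_option maxHeartbeats 4000000 in
theorem statement12 (n : ℕ) (hn : 1 ≤ n) (A : GL (Fin n) ℝ) :
    (∃ (k : ℕ) (X : Matrix (Fin n) (Fin n) ℝ), 0 < k ∧
        NormedSpace.exp X = (A : Matrix (Fin n) (Fin n) ℝ) ^ k) ∧
    ∃ X : Matrix (Fin n) (Fin n) ℝ,
      NormedSpace.exp X = (A : Matrix (Fin n) (Fin n) ℝ) ^ 2 := by
  letI : NormedRing (Matrix (Fin n) (Fin n) ℝ) := Matrix.linftyOpNormedRing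
  letI : NormedAlgebra ℝ (Matrix (Fin n) (Fin n) ℝ) := Matrix.linftyOpNormedAlgebra
  set a : Matrix (Fin n) (Fin n) ℝ := (A : Matrix (Fin n) (Fin n) ℝ) with ha
  set R' : Subalgebra ℝ (Matrix (Fin n) (Fin n) ℝ) := Algebra.adjoin ℝ {a} with hR'
  letI : CommRing ↥R' := Algebra.adjoinCommRingOfComm ℝ
    (fun x hx y hy => by
      rw [Set.mem_singleton_iff] at hx hy
      rw [hx, hy])
  letI : NormedCommRing ↥R' := { (inferInstance : NormedRing ↥R') with
    mul_comm := mul_comm }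
  letI : UniformSpace ↥R' := PseudoMetricSpace.toUniformSpace
  letI : TopologicalSpace ↥R' := UniformSpace.toTopologicalSpace
  haveI : FiniteDimensional ℝ ↥R' := inferInstance
  haveI : CompleteSpace ↥R' := FiniteDimensional.complete ℝ _
  -- the inverse of a is in R'
  have hIsUnit : IsUnit a := A.isUnit
  have hdet : a.det ≠ 0 := by
    have := (Matrix.isUnit_iff_isUnit_det a).mp hIsUnit
    exact this.ne_zero
  set p := a.charpoly with hp
  have hc0 : p.coeff 0 ≠ 0 := by
    intro h
    apply hdet
    rw [Matrix.det_eq_sign_charpoly_coeff, ← hp, h, mul_zero]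
  set b : Matrix (Fin n) (Fin n) ℝ :=
    (-(p.coeff 0)⁻¹) • (Polynomial.aeval a) p.divX with hb
  have haq : (Polynomial.aeval a) (Polynomial.X * p.divX)
      = a * (Polynomial.aeval a) p.divX := by
    rw [_root_.map_mul, Polynomial.aeval_X]
  have hcomm : (Polynomial.aeval a) p.divX * a = a * (Polynomial.aeval a) p.divX := by
    have h1 : (Polynomial.aeval a) (p.divX * Polynomial.X)
        = (Polynomial.aeval a) (Polynomial.X * p.divX) := by rw [mul_comm]
    rw [_root_.map_mul, _root_.map_mul, Polynomial.aeval_X] at h1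
    exact h1
  have hkey : a * (Polynomial.aeval a) p.divX = -(p.coeff 0) • 1 := by
    have h1 := Polynomial.X_mul_divX_add p
    have h2 := congrArg (Polynomial.aeval a) h1
    rw [_root_.map_add, haq, Polynomial.aeval_C] at h2
    rw [hp] at h2
    rw [Matrix.aeval_self_charpoly] at h2
    have := congrArg (fun z => z - (algebraMap ℝ (Matrix (Fin n) (Fin n) ℝ)) (p.coeff 0)) h2
    simp only [add_sub_cancel_right, zero_sub] at this
    rw [hp] at this ⊢
    rw [neg_smul, ← Algebra.algebraMap_eq_smul_one, eq_neg_iff_add_eq_zero]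
    exact h2
  have hab : a * b = 1 := by
    rw [hb, mul_smul_comm, hkey, smul_smul]
    rw [neg_mul_neg, inv_mul_cancel₀ hc0, one_smul]
  have hba : b * a = 1 := by
    rw [hb, smul_mul_assoc, hcomm, ← mul_smul_comm, ← hb, hab]
  have hamem : a ∈ R' := Algebra.self_mem_adjoin_singleton ℝ a
  have hbmem : b ∈ R' := by
    rw [hR', Algebra.adjoin_singleton_eq_range_aeval]
    refine ⟨(-(p.coeff 0)⁻¹) • p.divX, ?_⟩
    show (Polynomial.aeval a) ((-(p.coeff 0)⁻¹) • p.divX) = b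
    rw [_root_.map_smul]
  set u : (↥R')ˣ :=
    { val := ⟨a, hamem⟩
      inv := ⟨b, hbmem⟩
      val_inv := Subtype.ext (by simpa using hab)
      inv_val := Subtype.ext (by simpa using hba) } with hu
  obtain ⟨y, hy⟩ := exp_sq_of_unit u
  have hcont : Continuous (R'.val) := by
    exact continuous_subtype_val
  letI : NormedAlgebra ℚ ↥R' := NormedAlgebra.restrictScalars ℚ ℝ ↥R'
  have hval := NormedSpace.map_exp (R'.val : ↥R' →ₐ[ℝ] Matrix (Fin n) (Fin n) ℝ) hcont y
  have hfinal : NormedSpace.exp (R'.val y) = a ^ 2 := by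
    rw [show NormedSpace.exp (R'.val y) = R'.val (NormedSpace.exp y) from hval.symm, hy, map_pow]
    rfl
  exact ⟨⟨2, R'.val y, two_pos, hfinal⟩, ⟨R'.val y, hfinal⟩⟩
end
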